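/- arXiv:2408.10968 — 7 statements merged into one kernel-verified Lean document; each statement's English description precedes it below -/
import Mathlib

section
/- Let H₊ and H₋ be complex Hilbert spaces and H = H₊ × H₋. A closed subspace M of H is a maximal completely positive-definite subspace (with respect to the standard form ω) if and only if there exists a continuous linear map B : H₊ → H₋ with operator norm ‖B‖ < 1 such that M = {(x, B x) : x ∈ H₊}. -/
noncomputable section

open Complex

variable {Hp Hm : Type*}
  [NormedAddCommGroup Hp] [InnerProductSpace ℂ Hp] [CompleteSpace Hp]
  [NormedAddCommGroup Hm] [InnerProductSpace ℂ Hm] [CompleteSpace Hm]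

/-- The standard strong symplectic form `ω((x₁,x₂),(y₁,y₂)) = i⟨x₁,y₁⟩ − i⟨x₂,y₂⟩` on
`H₊ × H₋`, linear in the first argument and conjugate-linear in the second.
(Since Mathlib's `inner` is conjugate-linear in its *first* argument, the paper's
`⟨a,b⟩` is `inner b a`.) -/
def stdForm (x y : Hp × Hm) : ℂ :=
  Complex.I * (inner ℂ y.1 x.1 : ℂ) - Complex.I * (inner ℂ y.2 x.2 : ℂ)

/-- `M` is a completely positive-definite closed subspace: it is closed and there is `c > 0`
with `−iω(x,x) ≥ c‖x‖²` for all `x ∈ M`. -/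
def IsCPD (M : Submodule ℂ (Hp × Hm)) : Prop :=
  IsClosed (M : Set (Hp × Hm)) ∧
    ∃ c : ℝ, 0 < c ∧ ∀ x ∈ M, c * ‖x‖ ^ 2 ≤ (-Complex.I * stdForm x x).re

/-- `M` is a maximal completely positive-definite subspace: completely positive-definite and
not properly contained in another completely positive-definite closed subspace. -/
def IsMaxCPD (M : Submodule ℂ (Hp × Hm)) : Prop :=
  IsCPD M ∧ ∀ N : Submodule ℂ (Hp × Hm), IsCPD N → M ≤ N → N = M

lemma stdForm_re (x : Hp × Hm) : (-Complex.I * stdForm x x).re = ‖x.1‖ ^ 2 - ‖x.2‖ ^ 2 := by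
  have h : -Complex.I * stdForm x x = (inner ℂ x.1 x.1 : ℂ) - (inner ℂ x.2 x.2 : ℂ) := by
    unfold stdForm; ring_nf
    rw [Complex.I_sq]; ring
  rw [h, Complex.sub_re, inner_self_eq_norm_sq_to_K, inner_self_eq_norm_sq_to_K]
  norm_cast

set_option maxHeartbeats 2000000 in
/-- A closed subspace `M` of `H₊ × H₋` is a maximal completely positive-definite subspace
iff it is the graph of a continuous linear map `B : H₊ → H₋` with `‖B‖ < 1`. -/
theorem statement0 (M : Submodule ℂ (Hp × Hm)) (hM : IsClosed (M : Set (Hp × Hm))) :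
    IsMaxCPD M ↔
      ∃ B : Hp →L[ℂ] Hm, ‖B‖ < 1 ∧
        (M : Set (Hp × Hm)) = Set.range fun x : Hp => (x, B x) := by
  constructor
  · rintro ⟨⟨-, c₀, hc₀, hcpd₀⟩, hmax⟩
    -- normalize the constant to `c ≤ 1/2`
    set c : ℝ := min c₀ (1 / 2) with hcdef
    have hc : 0 < c := lt_min hc₀ (by norm_num)
    have hc1 : c ≤ 1 / 2 := min_le_right _ _
    have hcpd : ∀ x ∈ M, c * ‖x‖ ^ 2 ≤ ‖x.1‖ ^ 2 - ‖x.2‖ ^ 2 := by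
      intro x hx
      have := hcpd₀ x hx
      rw [stdForm_re] at this
      refine le_trans ?_ this
      have : (0:ℝ) ≤ ‖x‖ ^ 2 := by positivity
      nlinarith [min_le_left c₀ (1/2 : ℝ)]
    -- key estimate: the second component is dominated by the first
    have hdom : ∀ x ∈ M, ‖x.2‖ ^ 2 ≤ (1 - c) * ‖x.1‖ ^ 2 := by
      intro x hx
      have h1 : ‖x.1‖ ≤ ‖x‖ := norm_fst_le x
      have h1' : ‖x.1‖ ^ 2 ≤ ‖x‖ ^ 2 := by
        have := norm_nonneg x.1
        nlinarith
      have := hcpd x hx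
      nlinarith
    have hle : ∀ x ∈ M, ‖x.2‖ ≤ ‖x.1‖ := by
      intro x hx
      nlinarith [hdom x hx, norm_nonneg x.1, norm_nonneg x.2, sq_nonneg ‖x.1‖]
    have hnorm : ∀ x ∈ M, ‖x‖ = ‖x.1‖ := by
      intro x hx
      rw [Prod.norm_def, max_eq_left (hle x hx)]
    -- uniqueness of the second component
    have huniq : ∀ a : Hm, ((0 : Hp), a) ∈ M → a = 0 := by
      intro a ha
      have := hdom _ ha
      simp only [norm_zero] at this
      have : ‖a‖ ^ 2 ≤ 0 := by simpa using this
      have : ‖a‖ = 0 := by nlinarith [norm_nonneg a]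
      simpa using this
    -- surjectivity of the first projection, via maximality
    have hsurj : ∀ u : Hp, ∃ a : Hm, (u, a) ∈ M := by
      set V : Submodule ℂ Hp := M.map (LinearMap.fst ℂ Hp Hm) with hV
      -- V is closed
      have hMc : CompleteSpace M := hM.completeSpace_coe
      have hiso : Isometry (fun x : M => (x : Hp × Hm).1) := by
        apply AddMonoidHomClass.isometry_of_norm
          (((LinearMap.fst ℂ Hp Hm).comp M.subtype))
        intro x
        exact (hnorm x x.2).symm
      have hrange : Set.range (fun x : M => (x : Hp × Hm).1) = (V : Set Hp) := by
        ext u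
        simp [hV, Submodule.mem_map, Set.range]
      have hVclosed : IsClosed (V : Set Hp) := by
        rw [← hrange]
        exact hiso.isClosedEmbedding.isClosed_range
      haveI : CompleteSpace V := hVclosed.completeSpace_coe
      have hVtop : V = ⊤ := by
        by_contra hne
        have hbot : Vᗮ ≠ ⊥ := fun h => hne (Submodule.orthogonal_eq_bot_iff.mp h)
        obtain ⟨u, huV, hune⟩ := Submodule.exists_mem_ne_zero_of_ne_bot hbot
        have hu0' : ∀ x ∈ M, (inner ℂ x.1 u : ℂ) = 0 := by
          intro x hx
          exact huV x.1 ⟨x, hx, rfl⟩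
        have hu0 : ∀ x ∈ M, (inner ℂ u x.1 : ℂ) = 0 := by
          intro x hx
          rw [← inner_conj_symm, hu0' x hx, map_zero]
        -- enlarge M by the vector (u, 0)
        set L : (Hp × Hm) →L[ℂ] (Hp × Hm) :=
          ContinuousLinearMap.id ℂ (Hp × Hm) -
            ((innerSL ℂ u).comp (ContinuousLinearMap.fst ℂ Hp Hm)).smulRight
              ((((‖u‖ : ℂ) ^ 2)⁻¹) • ((u, 0) : Hp × Hm)) with hL
        have hLapp : ∀ y : Hp × Hm,
            L y = y - ((inner ℂ u y.1 : ℂ) * ((‖u‖ : ℂ) ^ 2)⁻¹) • ((u, 0) : Hp × Hm) := by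
          intro y
          simp [hL, smul_smul]
        have hnu : ((‖u‖ : ℂ) ^ 2) ≠ 0 := by
          have h0 : (‖u‖ : ℝ) ≠ 0 := norm_ne_zero_iff.mpr hune
          exact pow_ne_zero 2 (by exact_mod_cast h0)
        set N : Submodule ℂ (Hp × Hm) := M.comap (L : (Hp × Hm) →ₗ[ℂ] (Hp × Hm)) with hN
        have hNmem : ∀ y : Hp × Hm, y ∈ N ↔ L y ∈ M := fun y => Iff.rfl
        have hMN : M ≤ N := by
          intro x hx
          rw [hNmem, hLapp, hu0 x hx]
          simpa using hx
        have huN : ((u, (0 : Hm)) : Hp × Hm) ∈ N := by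
          rw [hNmem, hLapp]
          have : (inner ℂ u u : ℂ) = (‖u‖ : ℂ) ^ 2 := inner_self_eq_norm_sq_to_K u
          simp only [this]
          rw [mul_inv_cancel₀ hnu, one_smul, sub_self]
          exact M.zero_mem
        -- N is CPD
        have hNcpd : IsCPD N := by
          refine ⟨?_, c, hc, ?_⟩
          · exact hM.preimage L.continuous
          · intro y hy
            rw [stdForm_re]
            set x : Hp × Hm := L y with hx
            have hxM : x ∈ M := hy
            set a : ℂ := (inner ℂ u y.1 : ℂ) * ((‖u‖ : ℂ) ^ 2)⁻¹ with ha
            have hyx : y = x + a • ((u, 0) : Hp × Hm) := by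
              rw [hx, hLapp]; abel
            have hy1 : y.1 = x.1 + a • u := by rw [hyx]; simp
            have hy2 : y.2 = x.2 := by rw [hyx]; simp
            have horth : (inner ℂ x.1 (a • u) : ℂ) = 0 := by
              have h1 : (inner ℂ u x.1 : ℂ) = 0 := hu0 x hxM
              have h2 : (inner ℂ x.1 u : ℂ) = 0 := by
                rw [← inner_conj_symm, h1, map_zero]
              rw [inner_smul_right, h2, mul_zero]
            have hpyth : ‖y.1‖ ^ 2 = ‖x.1‖ ^ 2 + ‖a • u‖ ^ 2 := by
              rw [hy1, @norm_add_sq ℂ]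
              rw [horth]
              simp
            have hx2 : ‖x.2‖ ^ 2 ≤ (1 - c) * ‖x.1‖ ^ 2 := hdom x hxM
            have hxn : ‖x‖ = ‖x.1‖ := hnorm x hxM
            have hcx : c * ‖x.1‖ ^ 2 ≤ ‖x.1‖ ^ 2 - ‖x.2‖ ^ 2 := by
              have := hcpd x hxM
              rwa [hxn] at this
            have hyn : ‖y‖ ^ 2 ≤ ‖x.1‖ ^ 2 + ‖a • u‖ ^ 2 := by
              rw [Prod.norm_def]
              rcases max_cases ‖y.1‖ ‖y.2‖ with ⟨h, -⟩ | ⟨h, -⟩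
              · rw [h, hpyth]
              · rw [h, hy2]
                have := hle x hxM
                nlinarith [sq_nonneg ‖a • u‖, norm_nonneg x.1, norm_nonneg x.2]
            calc c * ‖y‖ ^ 2 ≤ c * (‖x.1‖ ^ 2 + ‖a • u‖ ^ 2) := by
                  exact mul_le_mul_of_nonneg_left hyn hc.le
              _ ≤ (‖x.1‖ ^ 2 - ‖x.2‖ ^ 2) + ‖a • u‖ ^ 2 := by
                  nlinarith [sq_nonneg ‖a • u‖]
              _ = ‖y.1‖ ^ 2 - ‖y.2‖ ^ 2 := by rw [hpyth, hy2]; ring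
        have hNM : N = M := hmax N hNcpd hMN
        rw [hNM] at huN
        have : (inner ℂ u u : ℂ) = 0 := hu0 _ huN
        exact hune (inner_self_eq_zero.mp this)
      intro u
      have : u ∈ V := hVtop ▸ Submodule.mem_top
      obtain ⟨x, hx, hx1⟩ := this
      exact ⟨x.2, by rw [← hx1]; exact hx⟩
    -- build the graph map
    choose g hg using hsurj
    have huniq2 : ∀ (v : Hp) (a b : Hm), (v, a) ∈ M → (v, b) ∈ M → a = b := by
      intro v a b ha hb
      have : ((0 : Hp), a - b) ∈ M := by
        have := M.sub_mem ha hb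
        simpa using this
      have := huniq _ this
      linear_combination (norm := module) this
    have hadd : ∀ u v : Hp, g (u + v) = g u + g v := by
      intro u v
      refine huniq2 (u + v) _ _ (hg (u + v)) ?_
      have := M.add_mem (hg u) (hg v)
      simpa using this
    have hsmul : ∀ (r : ℂ) (u : Hp), g (r • u) = r • g u := by
      intro r u
      refine huniq2 (r • u) _ _ (hg (r • u)) ?_
      have := M.smul_mem r (hg u)
      simpa using this
    have hbound : ∀ u : Hp, ‖g u‖ ≤ Real.sqrt (1 - c) * ‖u‖ := by
      intro u
      have h := hdom (u, g u) (hg u)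
      simp only at h
      have h1c : (0:ℝ) ≤ 1 - c := by linarith
      have : ‖g u‖ = Real.sqrt (‖g u‖ ^ 2) := by
        rw [Real.sqrt_sq (norm_nonneg _)]
      rw [this]
      have h2 : Real.sqrt (‖g u‖ ^ 2) ≤ Real.sqrt ((1 - c) * ‖u‖ ^ 2) :=
        Real.sqrt_le_sqrt h
      refine h2.trans ?_
      rw [Real.sqrt_mul h1c, Real.sqrt_sq (norm_nonneg _)]
    set Bl : Hp →ₗ[ℂ] Hm :=
      { toFun := g, map_add' := hadd, map_smul' := hsmul } with hBl
    refine ⟨Bl.mkContinuous (Real.sqrt (1 - c)) hbound, ?_, ?_⟩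
    · have h1 : ‖Bl.mkContinuous (Real.sqrt (1 - c)) hbound‖ ≤ Real.sqrt (1 - c) :=
        Bl.mkContinuous_norm_le (Real.sqrt_nonneg _) hbound
      have h2 : Real.sqrt (1 - c) < 1 := by
        rw [Real.sqrt_lt' one_pos]
        nlinarith
      exact lt_of_le_of_lt h1 h2
    · ext x
      constructor
      · intro hx
        refine ⟨x.1, ?_⟩
        have : g x.1 = x.2 := huniq2 x.1 _ _ (hg x.1) (by simpa using hx)
        simp only [LinearMap.mkContinuous_apply, hBl, LinearMap.coe_mk, AddHom.coe_mk]
        rw [this]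
      · rintro ⟨u, rfl⟩
        simpa [hBl] using hg u
  · rintro ⟨B, hB, hset⟩
    have hmem : ∀ x : Hp × Hm, x ∈ M ↔ x.2 = B x.1 := by
      intro x
      constructor
      · intro hx
        have : x ∈ (M : Set (Hp × Hm)) := hx
        rw [hset] at this
        obtain ⟨u, hu⟩ := this
        have h1 : x.1 = u := by rw [← hu]
        have h2 : x.2 = B u := by rw [← hu]
        rw [h2, h1]
      · intro hx
        show x ∈ (M : Set (Hp × Hm))
        rw [hset]
        exact ⟨x.1, Prod.ext rfl hx.symm⟩
    have hBnn : (0:ℝ) ≤ ‖B‖ := norm_nonneg B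
    constructor
    · refine ⟨hM, 1 - ‖B‖ ^ 2, by nlinarith, ?_⟩
      intro x hx
      rw [stdForm_re]
      have hx2 : x.2 = B x.1 := (hmem x).mp hx
      have hBle : ‖x.2‖ ≤ ‖B‖ * ‖x.1‖ := hx2 ▸ B.le_opNorm x.1
      have hle1 : ‖x.2‖ ≤ ‖x.1‖ := by nlinarith [norm_nonneg x.1, norm_nonneg x.2]
      have hxn : ‖x‖ = ‖x.1‖ := by rw [Prod.norm_def, max_eq_left hle1]
      rw [hxn]
      nlinarith [norm_nonneg x.1, norm_nonneg x.2]
    · rintro N ⟨-, c, hc, hNc⟩ hMN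
      refine le_antisymm ?_ hMN
      intro y hy
      have hgr : ((y.1, B y.1) : Hp × Hm) ∈ N := hMN ((hmem _).mpr rfl)
      obtain ⟨z, hz, hzdef⟩ : ∃ z : Hp × Hm, z ∈ N ∧ z = y - (y.1, B y.1) :=
        ⟨_, N.sub_mem hy hgr, rfl⟩
      have hz1 : z.1 = 0 := by rw [hzdef]; simp
      have hq := hNc _ hz
      rw [stdForm_re, hz1] at hq
      simp only [norm_zero] at hq
      have hzn2 : ‖z‖ ^ 2 ≤ 0 := by nlinarith [sq_nonneg ‖z.2‖]
      have h' : ‖z‖ ^ 2 = 0 := le_antisymm hzn2 (sq_nonneg _)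
      have hzn : ‖z‖ = 0 := (pow_eq_zero_iff two_ne_zero).mp h'
      have hz0 : z = 0 := norm_eq_zero.mp hzn
      rw [hzdef] at hz0
      have hy' : y = (y.1, B y.1) := sub_eq_zero.mp hz0
      rw [hmem]
      exact congrArg Prod.snd hy'

end
end

section
/- Let H₊ and H₋ be complex Hilbert spaces and let B be a holomorphic (Fréchet-differentiable) map from the open upper half-plane ℂ₊ = {λ ∈ ℂ : Im λ > 0} into the space of bounded linear operators from H₊ to H₋, with ‖B(λ)‖ < 1 for every λ ∈ ℂ₊. Then for each λ ∈ ℂ₊ the operator Id − B(λ)B(λ)* is invertible, and the self-adjoint operator (Id − B(λ)*B(λ)) − 4(Im λ)² · B′(λ)* ∘ (Id − B(λ)B(λ)*)⁻¹ ∘ B′(λ) on H₊ is nonnegative, i.e. 4(Im λ)² B′(λ)* (Id − B(λ)B(λ)*)⁻¹ B′(λ) ≤ Id − B(λ)*B(λ) in the Loewner order. -/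
noncomputable section

open Complex ContinuousLinearMap

variable {Hp Hm : Type*}
  [NormedAddCommGroup Hp] [InnerProductSpace ℂ Hp] [CompleteSpace Hp]
  [NormedAddCommGroup Hm] [InnerProductSpace ℂ Hm] [CompleteSpace Hm]

section Aux

variable {E F : Type*}
  [NormedAddCommGroup E] [InnerProductSpace ℂ E] [CompleteSpace E]
  [NormedAddCommGroup F] [InnerProductSpace ℂ F] [CompleteSpace F]

-- Cauchy-Schwarz for a positive operator
lemma cs_pos (T : E →L[ℂ] E) (hT : T.IsPositive) (x y : E) :
    ‖(inner ℂ x (T y) : ℂ)‖ ^ 2 ≤ (inner ℂ x (T x) : ℂ).re * (inner ℂ y (T y) : ℂ).re := by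
  have hsym : ∀ a b : E, (starRingEnd ℂ) (inner ℂ b (T a) : ℂ) = inner ℂ a (T b) := by
    intro a b
    rw [inner_conj_symm]
    conv_lhs => rw [← hT.isSelfAdjoint.adjoint_eq]
    exact adjoint_inner_left T b a
  letI c : PreInnerProductSpace.Core ℂ E :=
    { inner := fun a b => inner ℂ a (T b)
      conj_inner_symm := hsym
      re_inner_nonneg := fun a => hT.re_inner_nonneg_right a
      add_left := fun a b z => by simp [inner_add_left]
      smul_left := fun a b r => by simp [inner_smul_left, mul_comm] }
  have h := InnerProductSpace.Core.inner_mul_inner_self_le (𝕜 := ℂ) (F := E) (c := c) x y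
  have h' : ‖(inner ℂ x (T y) : ℂ)‖ * ‖(inner ℂ y (T x) : ℂ)‖ ≤
      (inner ℂ x (T x) : ℂ).re * (inner ℂ y (T y) : ℂ).re := h
  have h2 : ‖(inner ℂ y (T x) : ℂ)‖ = ‖(inner ℂ x (T y) : ℂ)‖ := by
    rw [← hsym x y, RCLike.norm_conj]
  calc ‖(inner ℂ x (T y) : ℂ)‖ ^ 2 = ‖(inner ℂ x (T y) : ℂ)‖ * ‖(inner ℂ y (T x) : ℂ)‖ := by
        rw [sq, h2]
    _ ≤ _ := h'

lemma norm_adj (A : E →L[ℂ] F) : ‖adjoint A‖ = ‖A‖ :=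
  LinearIsometryEquiv.norm_map ContinuousLinearMap.adjoint A

lemma normPlt (A : E →L[ℂ] F) (hA : ‖A‖ < 1) : ‖A ∘L adjoint A‖ < 1 := by
  have h := opNorm_comp_le A (adjoint A)
  have h2 : ‖A‖ * ‖adjoint A‖ < 1 := by
    rw [norm_adj]; nlinarith [norm_nonneg A]
  linarith

lemma normQlt (A : E →L[ℂ] F) (hA : ‖A‖ < 1) : ‖(adjoint A) ∘L A‖ < 1 := by
  have h := opNorm_comp_le (adjoint A) A
  have h2 : ‖adjoint A‖ * ‖A‖ < 1 := by
    rw [norm_adj]; nlinarith [norm_nonneg A]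
  linarith

/-- the unit `1 - A A†` -/
def uP (A : E →L[ℂ] F) (hA : ‖A‖ < 1) : (F →L[ℂ] F)ˣ :=
  Units.oneSub (A ∘L adjoint A) (normPlt A hA)

/-- the unit `1 - A† A` -/
def uQ (A : E →L[ℂ] F) (hA : ‖A‖ < 1) : (E →L[ℂ] E)ˣ :=
  Units.oneSub ((adjoint A) ∘L A) (normQlt A hA)

/-- inverse of `1 - A A†` -/
def Pinv (A : E →L[ℂ] F) (hA : ‖A‖ < 1) : F →L[ℂ] F := ((uP A hA)⁻¹ : (F →L[ℂ] F)ˣ)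
/-- inverse of `1 - A† A` -/
def Qinv (A : E →L[ℂ] F) (hA : ‖A‖ < 1) : E →L[ℂ] E := ((uQ A hA)⁻¹ : (E →L[ℂ] E)ˣ)

variable (A : E →L[ℂ] F) (hA : ‖A‖ < 1)

lemma uP_val : (uP A hA : F →L[ℂ] F) = 1 - A ∘L adjoint A := rfl
lemma uQ_val : (uQ A hA : E →L[ℂ] E) = 1 - (adjoint A) ∘L A := rfl

lemma AQ_PA : A ∘L (uQ A hA : E →L[ℂ] E) = (uP A hA : F →L[ℂ] F) ∘L A := by
  rw [uP_val, uQ_val]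
  simp only [comp_sub, sub_comp, comp_assoc, one_def, comp_id, id_comp]

lemma QAd_AdP : (uQ A hA : E →L[ℂ] E) ∘L adjoint A = adjoint A ∘L (uP A hA : F →L[ℂ] F) := by
  rw [uP_val, uQ_val]
  simp only [comp_sub, sub_comp, comp_assoc, one_def, comp_id, id_comp]

lemma Qi_Q : Qinv A hA ∘L (uQ A hA : E →L[ℂ] E) = 1 := by
  rw [Qinv, ← mul_def]; exact (uQ A hA).inv_mul
lemma Q_Qi : (uQ A hA : E →L[ℂ] E) ∘L Qinv A hA = 1 := by
  rw [Qinv, ← mul_def]; exact (uQ A hA).mul_inv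
lemma Pi_P : Pinv A hA ∘L (uP A hA : F →L[ℂ] F) = 1 := by
  rw [Pinv, ← mul_def]; exact (uP A hA).inv_mul
lemma P_Pi : (uP A hA : F →L[ℂ] F) ∘L Pinv A hA = 1 := by
  rw [Pinv, ← mul_def]; exact (uP A hA).mul_inv

lemma AQi_PiA : A ∘L Qinv A hA = Pinv A hA ∘L A := by
  calc A ∘L Qinv A hA
      = (Pinv A hA ∘L (uP A hA : F →L[ℂ] F)) ∘L (A ∘L Qinv A hA) := by
        rw [Pi_P, one_def, id_comp]
    _ = Pinv A hA ∘L (((uP A hA : F →L[ℂ] F) ∘L A) ∘L Qinv A hA) := by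
        rw [comp_assoc, comp_assoc]
    _ = Pinv A hA ∘L ((A ∘L (uQ A hA : E →L[ℂ] E)) ∘L Qinv A hA) := by
        rw [AQ_PA]
    _ = Pinv A hA ∘L A := by
        rw [comp_assoc, Q_Qi, one_def, comp_id]

lemma QiAd_AdPi : Qinv A hA ∘L adjoint A = adjoint A ∘L Pinv A hA := by
  calc Qinv A hA ∘L adjoint A
      = Qinv A hA ∘L ((adjoint A ∘L (uP A hA : F →L[ℂ] F)) ∘L Pinv A hA) := by
        rw [comp_assoc, P_Pi, one_def, comp_id]
    _ = Qinv A hA ∘L (((uQ A hA : E →L[ℂ] E) ∘L adjoint A) ∘L Pinv A hA) := by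
        rw [QAd_AdP]
    _ = adjoint A ∘L Pinv A hA := by
        rw [← comp_assoc, ← comp_assoc, Qi_Q, one_def, id_comp]

lemma Qi_eq : Qinv A hA = 1 + (adjoint A) ∘L (Pinv A hA ∘L A) := by
  have h : (uQ A hA : E →L[ℂ] E) ∘L (1 + (adjoint A) ∘L (Pinv A hA ∘L A)) = 1 := by
    rw [comp_add, ← comp_assoc, QAd_AdP, comp_assoc, ← comp_assoc ((uP A hA : F →L[ℂ] F)), P_Pi]
    rw [uQ_val]
    simp [one_def]
  calc Qinv A hA
      = Qinv A hA ∘L ((uQ A hA : E →L[ℂ] E) ∘L (1 + (adjoint A) ∘L (Pinv A hA ∘L A))) := by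
        rw [h, one_def, comp_id]
    _ = _ := by rw [← comp_assoc, Qi_Q, one_def, id_comp]

lemma AAd_Pi : (A ∘L adjoint A) ∘L Pinv A hA = Pinv A hA - 1 := by
  have h : (A ∘L adjoint A) = 1 - (uP A hA : F →L[ℂ] F) := by
    rw [uP_val, sub_sub_cancel]
  rw [h, sub_comp, P_Pi, one_def, id_comp]


lemma inner_self_re {G : Type*} [NormedAddCommGroup G] [InnerProductSpace ℂ G] (x : G) :
    (inner ℂ x x : ℂ).re = ‖x‖ ^ 2 := by
  rw [inner_self_eq_norm_sq_to_K]; norm_cast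

lemma P_adj : adjoint (uP A hA : F →L[ℂ] F) = (uP A hA : F →L[ℂ] F) := by
  rw [uP_val, map_sub, adjoint_comp, adjoint_adjoint]
  congr 1
  rw [one_def, adjoint_id]

lemma Pinv_adj : adjoint (Pinv A hA) = Pinv A hA := by
  have h1 : adjoint (Pinv A hA) ∘L (uP A hA : F →L[ℂ] F) = 1 := by
    have := congrArg adjoint (P_Pi A hA)
    rwa [adjoint_comp, P_adj, one_def, adjoint_id, ← one_def] at this
  calc adjoint (Pinv A hA)
      = adjoint (Pinv A hA) ∘L ((uP A hA : F →L[ℂ] F) ∘L Pinv A hA) := by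
        rw [P_Pi, one_def, comp_id]
    _ = (adjoint (Pinv A hA) ∘L (uP A hA : F →L[ℂ] F)) ∘L Pinv A hA := by
        rw [comp_assoc]
    _ = Pinv A hA := by rw [h1, one_def, id_comp]

lemma Pinv_re_nonneg (w : F) : 0 ≤ (inner ℂ w (Pinv A hA w) : ℂ).re := by
  set p := Pinv A hA w with hp
  have hw : w = (uP A hA : F →L[ℂ] F) p := by
    have := ContinuousLinearMap.ext_iff.mp (P_Pi A hA) w
    simpa [comp_apply] using this.symm
  have hcalc : (inner ℂ w (Pinv A hA w) : ℂ) = inner ℂ p p - inner ℂ (adjoint A p) (adjoint A p) := by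
    conv_lhs => rw [← hp, hw, uP_val]
    rw [sub_apply, one_apply_eq_self, comp_apply, inner_sub_left, ← adjoint_inner_right A]
  rw [hcalc]
  have h3 : ‖adjoint A p‖ ≤ ‖p‖ := by
    have := (adjoint A).le_opNorm p
    have h4 : ‖adjoint A‖ ≤ 1 := by rw [norm_adj]; linarith
    nlinarith [norm_nonneg p, norm_nonneg (adjoint A p)]
  simp only [Complex.sub_re, inner_self_re]
  nlinarith [norm_nonneg p, norm_nonneg (adjoint A p)]

lemma Pinv_isPositive : (Pinv A hA).IsPositive := by
  constructor
  · rw [← isSelfAdjoint_iff_isSymmetric, isSelfAdjoint_iff']; exact Pinv_adj A hA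
  · intro w
    have := Pinv_re_nonneg A hA w
    rw [ContinuousLinearMap.reApplyInnerSelf]
    rwa [inner_re_symm]

lemma Q_re_nonneg (x : E) : 0 ≤ (inner ℂ ((uQ A hA : E →L[ℂ] E) x) x : ℂ).re := by
  have hcalc : (inner ℂ ((uQ A hA : E →L[ℂ] E) x) x : ℂ) = inner ℂ x x - inner ℂ (A x) (A x) := by
    rw [uQ_val, sub_apply, one_apply_eq_self, comp_apply, inner_sub_left]
    congr 1
    rw [adjoint_inner_left]
  rw [hcalc]
  have h3 : ‖A x‖ ≤ ‖x‖ := by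
    have := A.le_opNorm x
    nlinarith [norm_nonneg x]
  simp only [Complex.sub_re, inner_self_re]
  nlinarith [norm_nonneg x, norm_nonneg (A x)]

lemma key_identity (X : E →L[ℂ] F) (a : E) :
    (inner ℂ (a - adjoint A (X a)) (Qinv A hA (a - adjoint A (X a))) : ℂ)
      = inner ℂ (X a - A a) (Pinv A hA (X a - A a))
        + ((inner ℂ a a : ℂ) - inner ℂ (X a) (X a)) := by
  have e3p : ∀ w : F, A (adjoint A (Pinv A hA w)) = Pinv A hA w - w := by
    intro w
    have := ContinuousLinearMap.ext_iff.mp (AAd_Pi A hA) w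
    simpa [comp_apply, sub_apply, one_apply] using this
  have hQa : Qinv A hA a = a + adjoint A (Pinv A hA (A a)) := by
    have := ContinuousLinearMap.ext_iff.mp (Qi_eq A hA) a
    simpa [add_apply, comp_apply, one_apply] using this
  have hQAd : Qinv A hA (adjoint A (X a)) = adjoint A (Pinv A hA (X a)) := by
    have := ContinuousLinearMap.ext_iff.mp (QiAd_AdPi A hA) (X a)
    simpa [comp_apply] using this
  rw [map_sub, hQa, hQAd]
  have t1 : (inner ℂ a (adjoint A (Pinv A hA (A a))) : ℂ) = inner ℂ (A a) (Pinv A hA (A a)) :=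
    adjoint_inner_right A a (Pinv A hA (A a))
  have t2 : (inner ℂ a (adjoint A (Pinv A hA (X a))) : ℂ) = inner ℂ (A a) (Pinv A hA (X a)) :=
    adjoint_inner_right A a (Pinv A hA (X a))
  have t3 : (inner ℂ (adjoint A (X a)) a : ℂ) = inner ℂ (X a) (A a) :=
    adjoint_inner_left A a (X a)
  have t4 : (inner ℂ (adjoint A (X a)) (adjoint A (Pinv A hA (A a))) : ℂ)
      = inner ℂ (X a) (Pinv A hA (A a)) - inner ℂ (X a) (A a) := by
    rw [adjoint_inner_left A (adjoint A (Pinv A hA (A a))) (X a), e3p, inner_sub_right]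
  have t5 : (inner ℂ (adjoint A (X a)) (adjoint A (Pinv A hA (X a))) : ℂ)
      = inner ℂ (X a) (Pinv A hA (X a)) - inner ℂ (X a) (X a) := by
    rw [adjoint_inner_left A (adjoint A (Pinv A hA (X a))) (X a), e3p, inner_sub_right]
  simp only [inner_sub_left, inner_sub_right, inner_add_right, map_sub]
  rw [t1, t2, t3, t4, t5]
  ring

lemma key_ineq (X : E →L[ℂ] F) (hX : ‖X‖ ≤ 1) (a : E) :
    (inner ℂ (X a - A a) (Pinv A hA (X a - A a)) : ℂ).re
      ≤ (inner ℂ (a - adjoint A (X a)) (Qinv A hA (a - adjoint A (X a))) : ℂ).re := by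
  rw [key_identity]
  have h3 : ‖X a‖ ≤ ‖a‖ := by
    have := X.le_opNorm a
    nlinarith [norm_nonneg a]
  simp only [Complex.add_re, Complex.sub_re, inner_self_re]
  nlinarith [norm_nonneg a, norm_nonneg (X a)]

end Aux

set_option maxHeartbeats 2000000
open Metric

/-- Operator-valued Schwarz–Pick inequality: if `B` is holomorphic on the upper half-plane
with values in the strict unit ball of operators `H₊ → H₋`, then for every `λ` with
`Im λ > 0` the operator `Id − B(λ)B(λ)*` is invertible and
`4(Im λ)² B′(λ)* (Id − B(λ)B(λ)*)⁻¹ B′(λ) ≤ Id − B(λ)*B(λ)`, i.e. the difference is a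
nonnegative self-adjoint operator. -/
theorem statement7 (B : ℂ → (Hp →L[ℂ] Hm))
    (hdiff : ∀ z : ℂ, 0 < z.im → DifferentiableAt ℂ B z)
    (hcontr : ∀ z : ℂ, 0 < z.im → ‖B z‖ < 1)
    (lam : ℂ) (hlam : 0 < lam.im) :
    IsUnit ((1 : Hm →L[ℂ] Hm) - (B lam).comp (adjoint (B lam))) ∧
      ∀ x : Hp,
        0 ≤ (inner ℂ
          ((((1 : Hp →L[ℂ] Hp) - (adjoint (B lam)).comp (B lam)) -
            ((4 : ℂ) * (lam.im : ℂ) ^ 2) •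
              ((adjoint (deriv B lam)).comp
                ((Ring.inverse ((1 : Hm →L[ℂ] Hm) - (B lam).comp (adjoint (B lam)))).comp
                  (deriv B lam)))) x) x : ℂ).re := by
  set A : Hp →L[ℂ] Hm := B lam with hAdef
  have hA : ‖A‖ < 1 := hcontr lam hlam
  have hPunit : IsUnit ((1 : Hm →L[ℂ] Hm) - A ∘L adjoint A) := by
    have := (uP A hA).isUnit
    rwa [uP_val] at this
  refine ⟨hPunit, ?_⟩
  intro x
  set t : ℝ := lam.im with htdef
  set B' : Hp →L[ℂ] Hm := deriv B lam with hB'def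
  set b : Hm := B' x with hbdef
  set u : Hp := (uQ A hA : Hp →L[ℂ] Hp) x with hudef
  set s : ℝ := (inner ℂ b (Pinv A hA b) : ℂ).re with hsdef
  set q : ℝ := (inner ℂ ((uQ A hA : Hp →L[ℂ] Hp) x) x : ℂ).re with hqdef
  have hRinv : Ring.inverse ((1 : Hm →L[ℂ] Hm) - (B lam).comp (adjoint (B lam))) = Pinv A hA := by
    rw [← hAdef]
    have := NormedRing.inverse_one_sub (A ∘L adjoint A) (normPlt A hA)
    rw [this]; rfl
  have hQinvu : Qinv A hA u = x := by
    rw [hudef]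
    have := ContinuousLinearMap.ext_iff.mp (Qi_Q A hA) x
    simpa [comp_apply] using this
  have hq0 : 0 ≤ q := Q_re_nonneg A hA x
  have hs0 : 0 ≤ s := by
    rw [hsdef]; exact Pinv_re_nonneg A hA b
  have main : 4 * t ^ 2 * s ≤ q := by
    set Yz : ℂ → (Hp →L[ℂ] Hp) :=
      fun z => Ring.inverse ((1 : Hp →L[ℂ] Hp) - (adjoint A) ∘L B z) with hYzdef
    have hnormz : ∀ z : ℂ, 0 < z.im → ‖(adjoint A) ∘L B z‖ < 1 := by
      intro z hz
      have h1 := opNorm_comp_le (adjoint A) (B z)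
      have h2 := hcontr z hz
      have := norm_adj A
      nlinarith [norm_nonneg (B z), norm_nonneg (adjoint A)]
    have hunit : ∀ z : ℂ, 0 < z.im → IsUnit ((1 : Hp →L[ℂ] Hp) - (adjoint A) ∘L B z) := by
      intro z hz
      exact (Units.oneSub _ (hnormz z hz)).isUnit
    have hYlam : Yz lam = Qinv A hA := by
      rw [hYzdef]
      simp only
      rw [← hAdef]
      have h1 : (1 : Hp →L[ℂ] Hp) - (adjoint A) ∘L A = (uQ A hA : Hp →L[ℂ] Hp) :=
        (uQ_val A hA).symm
      rw [h1, Ring.inverse_unit]; rfl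
    have hainv : ∀ z : ℂ, 0 < z.im → ∀ w : Hp, (Yz z w) - adjoint A (B z (Yz z w)) = w := by
      intro z hz w
      have h := Ring.mul_inverse_cancel _ (hunit z hz)
      rw [mul_def] at h
      have h2 := ContinuousLinearMap.ext_iff.mp h w
      simpa [comp_apply, sub_apply, one_apply] using h2
    set v : Hm := b with hvdef
    set f : ℂ → ℂ := fun z => inner ℂ v (Pinv A hA ((B z - A) ((Yz z) u))) with hfdef
    set p : ℝ := (inner ℂ v (Pinv A hA v) : ℂ).re with hpdef
    have hp0 : 0 ≤ p := Pinv_re_nonneg A hA v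
    have hqu : (inner ℂ u (Qinv A hA u) : ℂ).re = q := by
      rw [hQinvu, hudef]
    have hbound : ∀ z : ℂ, 0 < z.im → ‖f z‖ ≤ Real.sqrt (p * q) := by
      intro z hz
      set a : Hp := (Yz z) u with hadef
      have hWu : (B z - A) ((Yz z) u) = B z a - A a := by rw [← hadef]; simp [sub_apply]
      have hcs := cs_pos (Pinv A hA) (Pinv_isPositive A hA) v (B z a - A a)
      have hki := key_ineq A hA (B z) (le_of_lt (hcontr z hz)) a
      have hau : a - adjoint A (B z a) = u := hainv z hz u
      rw [hau] at hki
      have h2 : ‖f z‖ ^ 2 ≤ p * q := by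
        rw [hfdef]
        simp only
        rw [hWu]
        calc ‖(inner ℂ v (Pinv A hA (B z a - A a)) : ℂ)‖ ^ 2
            ≤ p * (inner ℂ (B z a - A a) (Pinv A hA (B z a - A a)) : ℂ).re := hcs
          _ ≤ p * q := by
              apply mul_le_mul_of_nonneg_left _ hp0
              rw [← hqu]; exact hki
      exact (Real.le_sqrt (norm_nonneg _) (mul_nonneg hp0 hq0)).mpr h2
    have hYdiff : ∀ z : ℂ, 0 < z.im → DifferentiableAt ℂ Yz z := by
      intro z hz
      apply DifferentiableAt.inverse
      · apply DifferentiableAt.const_sub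
        have hM := (ContinuousLinearMap.compL ℂ Hp Hm Hp
          (adjoint A)).differentiable.differentiableAt.comp z (hdiff z hz)
        exact hM
      · exact hunit z hz
    have hgdiff : ∀ z : ℂ, 0 < z.im →
        DifferentiableAt ℂ (fun z => (B z - A) ((Yz z) u)) z := by
      intro z hz
      exact DifferentiableAt.clm_apply ((hdiff z hz).sub_const A)
        ((hYdiff z hz).clm_apply (differentiableAt_const u))
    have hfdiff : ∀ z : ℂ, 0 < z.im → DifferentiableAt ℂ f z := by
      intro z hz
      rw [hfdef]
      exact (((innerSL ℂ v).comp (Pinv A hA)).differentiable.differentiableAt).comp z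
        (hgdiff z hz)
    have hflam : HasDerivAt f (inner ℂ v (Pinv A hA b) : ℂ) lam := by
      have hBd : HasDerivAt (fun z => B z - A) B' lam :=
        ((hdiff lam hlam).hasDerivAt).sub_const A
      have hYd : HasDerivAt (fun z => (Yz z) u) ((deriv Yz lam) u) lam := by
        have h := ((hYdiff lam hlam).hasDerivAt).clm_apply (hasDerivAt_const lam u)
        simpa using h
      have hg : HasDerivAt (fun z => (B z - A) ((Yz z) u))
          (B' ((Yz lam) u) + (B lam - A) ((deriv Yz lam) u)) lam := hBd.clm_apply hYd
      have hzero : (B lam - A) ((deriv Yz lam) u) = 0 := by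
        rw [← hAdef]; simp
      rw [hzero, add_zero, hYlam, hQinvu] at hg
      have hcomp := (((innerSL ℂ v).comp (Pinv A hA)).hasFDerivAt).comp_hasDerivAt lam hg
      exact hcomp
    have hflam0 : f lam = 0 := by
      rw [hfdef]; simp [← hAdef]
    set φ : ℂ → ℂ := fun w => (lam - (starRingEnd ℂ) lam * w) / (1 - w) with hφdef
    have hφ0 : φ 0 = lam := by rw [hφdef]; simp
    have hφmem : ∀ w ∈ ball (0:ℂ) 1, 0 < (φ w).im := by
      intro w hw
      have hw1 : Complex.normSq w < 1 := by
        have habs : ‖w‖ < 1 := by simpa [dist_eq] using hw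
        rw [← Complex.sq_norm]
        nlinarith [norm_nonneg w]
      have hd : (1:ℂ) - w ≠ 0 := by
        intro h
        have hwe : w = 1 := by linear_combination -h
        rw [hwe] at hw1; simp [Complex.normSq] at hw1
      have hns : 0 < Complex.normSq (1 - w) := by rwa [Complex.normSq_pos]
      rw [hφdef]
      simp only
      rw [Complex.div_im]
      rw [div_sub_div_same]
      have hnum : (lam - (starRingEnd ℂ) lam * w).im * (1 - w).re
          - (lam - (starRingEnd ℂ) lam * w).re * (1 - w).im = t * (1 - Complex.normSq w) := by
        simp only [Complex.sub_im, Complex.sub_re, Complex.mul_im, Complex.mul_re,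
          Complex.conj_re, Complex.conj_im, Complex.one_re, Complex.one_im,
          Complex.normSq_apply, ← htdef]
        ring
      rw [hnum]
      exact div_pos (by nlinarith) hns
    have hφdiff : DifferentiableOn ℂ φ (ball (0:ℂ) 1) := by
      intro w hw
      have hd : (1:ℂ) - w ≠ 0 := by
        intro h
        have hwe : w = 1 := by linear_combination -h
        rw [hwe] at hw; simp at hw
      apply DifferentiableAt.differentiableWithinAt
      apply DifferentiableAt.div
      · exact (differentiableAt_const _).sub ((differentiableAt_const _).mul differentiableAt_id)
      · exact (differentiableAt_const _).sub differentiableAt_id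
      · exact hd
    have hφderiv : HasDerivAt φ (lam - (starRingEnd ℂ) lam) 0 := by
      have h1 : HasDerivAt (fun w : ℂ => lam - (starRingEnd ℂ) lam * w)
          (-(starRingEnd ℂ) lam) 0 := by
        simpa using (((hasDerivAt_id (0:ℂ)).const_mul ((starRingEnd ℂ) lam)).const_sub lam)
      have h2 : HasDerivAt (fun w : ℂ => (1:ℂ) - w) (-1) 0 := by
        simpa using ((hasDerivAt_id (0:ℂ)).const_sub 1)
      have h3 := h1.div h2 (by norm_num)
      refine h3.congr_deriv ?_
      ring
    -- Schwarz lemma application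
    have hF0 : (f ∘ φ) 0 = 0 := by simp [Function.comp, hφ0, hflam0]
    have hFdiff : DifferentiableOn ℂ (f ∘ φ) (ball (0:ℂ) 1) := by
      intro w hw
      exact ((hfdiff _ (hφmem w hw)).comp_differentiableWithinAt w (hφdiff w hw))
    have hFderiv : HasDerivAt (f ∘ φ) ((inner ℂ v (Pinv A hA b) : ℂ) *
        (lam - (starRingEnd ℂ) lam)) 0 := by
      have := (hφ0.symm ▸ hflam).comp 0 hφderiv
      exact this
    have hschwarz : ∀ ε : ℝ, 0 < ε →
        ‖deriv (f ∘ φ) 0‖ ≤ (Real.sqrt (p * q) + ε) / 1 := by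
      intro ε hε
      apply Complex.norm_deriv_le_div_of_mapsTo_ball hFdiff _ one_pos
      intro w hw
      rw [hF0, mem_closedBall, dist_eq_norm, sub_zero]
      refine le_of_lt ?_
      calc ‖f (φ w)‖ ≤ Real.sqrt (p * q) := hbound _ (hφmem w hw)
        _ < Real.sqrt (p * q) + ε := by linarith
    have hderiv_le : ‖(inner ℂ v (Pinv A hA b) : ℂ) * (lam - (starRingEnd ℂ) lam)‖
        ≤ Real.sqrt (p * q) := by
      rw [← hFderiv.deriv]
      by_contra hcon
      push_neg at hcon
      obtain ⟨ε, hε, hlt⟩ : ∃ ε : ℝ, 0 < ε ∧ Real.sqrt (p * q) + ε < ‖deriv (f ∘ φ) 0‖ :=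
        ⟨(‖deriv (f ∘ φ) 0‖ - Real.sqrt (p * q)) / 2, by linarith, by linarith⟩
      have := hschwarz ε hε
      rw [div_one] at this
      linarith
    -- compute the norm
    have h2t : (0:ℝ) < 2 * lam.im := by
      have := hlam; rw [htdef] at this; linarith
    have habs : ‖(lam - (starRingEnd ℂ) lam)‖ = 2 * t := by
      rw [Complex.sub_conj, norm_mul]
      simp only [Complex.norm_I, mul_one, Complex.norm_real, Real.norm_eq_abs]
      rw [abs_of_pos h2t, htdef]
    have hfin : 2 * t * s ≤ Real.sqrt (p * q) := by
      have h1 : s ≤ ‖(inner ℂ v (Pinv A hA b) : ℂ)‖ := by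
        rw [hsdef, hvdef]
        exact Complex.re_le_norm _
      calc 2 * t * s ≤ 2 * t * ‖(inner ℂ v (Pinv A hA b) : ℂ)‖ := by
            apply mul_le_mul_of_nonneg_left h1 (by positivity)
        _ = ‖(inner ℂ v (Pinv A hA b) : ℂ) * (lam - (starRingEnd ℂ) lam)‖ := by
            rw [norm_mul, habs]; ring
        _ ≤ Real.sqrt (p * q) := hderiv_le
    -- square the inequality
    have hps : p = s := hsdef.symm
    rw [hps] at hfin
    have h2ts : (0:ℝ) ≤ 2 * t * s := by positivity
    have hsq : (2 * t * s) * (2 * t * s) ≤ Real.sqrt (s * q) * Real.sqrt (s * q) :=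
      mul_le_mul hfin hfin h2ts (Real.sqrt_nonneg _)
    rw [Real.mul_self_sqrt (mul_nonneg hs0 hq0)] at hsq
    rcases eq_or_lt_of_le hs0 with hzero | hpos
    · rw [← hzero]; simpa using hq0
    · nlinarith [hsq, hpos, sq_nonneg t]
  -- assemble the final inequality
  rw [hRinv]
  have hGx : (inner ℂ (((adjoint B').comp ((Pinv A hA).comp B')) x) x : ℂ)
      = inner ℂ (Pinv A hA b) b := by
    rw [comp_apply, comp_apply, adjoint_inner_left, ← hbdef]
  have hc : (starRingEnd ℂ) ((4 : ℂ) * (t : ℂ) ^ 2) = (((4 * t ^ 2 : ℝ)) : ℂ) := by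
    have hcast : ((4 : ℂ) * (t : ℂ) ^ 2) = (((4 * t ^ 2 : ℝ)) : ℂ) := by push_cast; ring
    rw [hcast, Complex.conj_ofReal]
  have hser : (inner ℂ (Pinv A hA b) b : ℂ).re = s := by
    rw [hsdef]
    exact inner_re_symm (𝕜 := ℂ) _ _
  have e1 : (inner ℂ ((((1 : Hp →L[ℂ] Hp) - (adjoint A).comp A) -
      ((4 : ℂ) * (t : ℂ) ^ 2) • ((adjoint B').comp ((Pinv A hA).comp B'))) x) x : ℂ)
      = inner ℂ (((1 : Hp →L[ℂ] Hp) - (adjoint A).comp A) x) x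
        - (((4 * t ^ 2 : ℝ)) : ℂ) * inner ℂ (Pinv A hA b) b := by
    rw [sub_apply, inner_sub_left, smul_apply, inner_smul_left, hGx, hc]
  rw [e1, Complex.sub_re]
  have e2 : ((((4 * t ^ 2 : ℝ)) : ℂ) * (inner ℂ (Pinv A hA b) b : ℂ)).re
      = 4 * t ^ 2 * s := by
    rw [Complex.mul_re]
    simp only [Complex.ofReal_re, Complex.ofReal_im, zero_mul, sub_zero]
    rw [hser]
  rw [e2]
  have e3 : (inner ℂ (((1 : Hp →L[ℂ] Hp) - (adjoint A).comp A) x) x : ℂ).re = q := by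
    have huq : ((1 : Hp →L[ℂ] Hp) - (adjoint A).comp A) = ((uQ A hA : Hp →L[ℂ] Hp)) :=
      (uQ_val A hA).symm
    rw [huq, ← hqdef]
  rw [e3]
  linarith [main]

end
end

section
/- Under the boundary triplet setup, the operator T₊ is densely defined and its adjoint equals T₋: the domain of T₊* is exactly {x ∈ D(T*) : Γ₋x = 0} and T₊*x = T*x for all such x. -/
noncomputable section

open Complex

variable {H Hp Hm : Type*}
  [NormedAddCommGroup H] [InnerProductSpace ℂ H] [CompleteSpace H]
  [NormedAddCommGroup Hp] [InnerProductSpace ℂ Hp] [CompleteSpace Hp]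
  [NormedAddCommGroup Hm] [InnerProductSpace ℂ Hm] [CompleteSpace Hm]

/-- Under the boundary triplet setup for a densely defined closed symmetric operator `T`
(with boundary maps `Γ₊, Γ₋` on `D(T*)` satisfying surjectivity, `ker Γ₊ ∩ ker Γ₋ = D(T)`,
continuity, and the abstract Green formula), the operator `T₊ = T*|_{ker Γ₊}` is densely
defined and its adjoint is exactly `T₋ = T*|_{ker Γ₋}`. -/
theorem statement8 (T : H →ₗ.[ℂ] H)
    (hdense : Dense (T.domain : Set H))
    (hclosed : IsClosed (T.graph : Set (H × H)))
    (hsymm : ∀ x y : T.domain, (inner ℂ (T x) ((y : H)) : ℂ) = inner ℂ ((x : H)) (T y))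
    (Γp : T.adjoint.domain →ₗ[ℂ] Hp) (Γm : T.adjoint.domain →ₗ[ℂ] Hm)
    (hsurj : Function.Surjective fun x : T.adjoint.domain => (Γp x, Γm x))
    (hker : ∀ x : T.adjoint.domain, (Γp x = 0 ∧ Γm x = 0) ↔ (x : H) ∈ T.domain)
    (hbound : ∃ C : ℝ, 0 < C ∧ ∀ x : T.adjoint.domain,
      ‖Γp x‖ ^ 2 + ‖Γm x‖ ^ 2 ≤ C * (‖(x : H)‖ ^ 2 + ‖T.adjoint x‖ ^ 2))
    (hgreen : ∀ x y : T.adjoint.domain,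
      (inner ℂ ((x : H)) (T.adjoint y) : ℂ) - inner ℂ (T.adjoint x) ((y : H)) =
        Complex.I * inner ℂ (Γp x) (Γp y) - Complex.I * inner ℂ (Γm x) (Γm y)) :
    Dense (((T.adjoint.domRestrict
        (Submodule.map T.adjoint.domain.subtype (LinearMap.ker Γp))).domain : Set H)) ∧
      (T.adjoint.domRestrict
          (Submodule.map T.adjoint.domain.subtype (LinearMap.ker Γp))).adjoint =
        T.adjoint.domRestrict
          (Submodule.map T.adjoint.domain.subtype (LinearMap.ker Γm)) := by
  classical
  set Kp := Submodule.map T.adjoint.domain.subtype (LinearMap.ker Γp) with hKp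
  set Km := Submodule.map T.adjoint.domain.subtype (LinearMap.ker Γm) with hKm
  set Tp := T.adjoint.domRestrict Kp with hTp
  set Tm := T.adjoint.domRestrict Km with hTm
  -- T is formally self-adjoint, hence T ≤ T†
  have hTsa : T.IsFormalAdjoint T := fun x y => hsymm x y
  have hTle : T ≤ T.adjoint := hTsa.le_adjoint hdense
  -- helper: lift an element of Tp.domain to T†.domain with Γp = 0
  have liftp : ∀ x : Tp.domain, ∃ x' : T.adjoint.domain,
      (x' : H) = (x : H) ∧ Γp x' = 0 ∧ Tp x = T.adjoint x' := by
    intro x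
    have hx : (x : H) ∈ Kp ⊓ T.adjoint.domain := x.2
    obtain ⟨z, hz, hzx⟩ := hx.1
    refine ⟨z, hzx, hz, ?_⟩
    exact LinearPMap.domRestrict_apply hzx.symm
  have liftm : ∀ x : Tm.domain, ∃ x' : T.adjoint.domain,
      (x' : H) = (x : H) ∧ Γm x' = 0 ∧ Tm x = T.adjoint x' := by
    intro x
    have hx : (x : H) ∈ Km ⊓ T.adjoint.domain := x.2
    obtain ⟨z, hz, hzx⟩ := hx.1
    refine ⟨z, hzx, hz, ?_⟩
    exact LinearPMap.domRestrict_apply hzx.symm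
  -- T.domain ⊆ Tp.domain
  have hsubp : (T.domain : Set H) ⊆ (Tp.domain : Set H) := by
    intro x hx
    have hxa : x ∈ T.adjoint.domain := hTle.1 hx
    have hG : Γp ⟨x, hxa⟩ = 0 ∧ Γm ⟨x, hxa⟩ = 0 := (hker ⟨x, hxa⟩).mpr hx
    have : x ∈ Kp ⊓ T.adjoint.domain := ⟨⟨⟨x, hxa⟩, hG.1, rfl⟩, hxa⟩
    rwa [hTp, LinearPMap.domRestrict_domain]
  have hTpdense : Dense (Tp.domain : Set H) := hdense.mono hsubp
  refine ⟨hTpdense, ?_⟩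
  -- Tp is formally adjoint to Tm (Green's formula)
  have hfa : Tp.IsFormalAdjoint Tm := by
    intro x y
    obtain ⟨x', hx'e, hx'p, hx'v⟩ := liftp x
    obtain ⟨y', hy'e, hy'm, hy'v⟩ := liftm y
    have hg := hgreen x' y'
    simp only [hx'p, hy'm, inner_zero_left, inner_zero_right, mul_zero, sub_zero] at hg
    rw [sub_eq_zero] at hg
    rw [hx'v, hy'v, ← hx'e, ← hy'e]
    exact hg.symm
  have hle1 : Tm ≤ Tp.adjoint := hfa.le_adjoint hTpdense
  -- T ≤ Tp, hence Tp† ≤ T†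
  have hTfaTp : T.IsFormalAdjoint Tp.adjoint := by
    intro x y
    have hx : (x : H) ∈ Tp.domain := hsubp x.2
    obtain ⟨x', hx'e, hx'p, hx'v⟩ := liftp ⟨(x : H), hx⟩
    have hTx : T x = Tp ⟨(x : H), hx⟩ := by
      rw [hx'v]
      have : T x = T.adjoint ⟨(x : H), hTle.1 x.2⟩ := hTle.2 rfl
      rw [this]
      congr 1
      exact Subtype.ext hx'e.symm
    calc (inner ℂ (T x) ((y : H)) : ℂ) = inner ℂ (Tp ⟨(x : H), hx⟩) ((y : H)) := by rw [hTx]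
      _ = inner ℂ ((x : H)) (Tp.adjoint y) := by
          have := ((Tp.adjoint_isFormalAdjoint hTpdense).symm) ⟨(x : H), hx⟩ y
          exact this
  have hle2' : Tp.adjoint ≤ T.adjoint := hTfaTp.le_adjoint hdense
  -- Tp† ≤ Tm
  have hle2 : Tp.adjoint ≤ Tm := by
    constructor
    · intro y hy
      have hya : y ∈ T.adjoint.domain := hle2'.1 hy
      -- show Γm ⟨y, hya⟩ = 0
      have hval : Tp.adjoint ⟨y, hy⟩ = T.adjoint ⟨y, hya⟩ := hle2'.2 rfl
      have horth : ∀ x' : T.adjoint.domain, Γp x' = 0 →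
          (inner ℂ (Γm x') (Γm ⟨y, hya⟩) : ℂ) = 0 := by
        intro x' hx'p
        have hxTp : (x' : H) ∈ Tp.domain := by
          have : (x' : H) ∈ Kp ⊓ T.adjoint.domain := ⟨⟨x', hx'p, rfl⟩, x'.2⟩
          rwa [hTp, LinearPMap.domRestrict_domain]
        have hTpx : Tp ⟨(x' : H), hxTp⟩ = T.adjoint x' :=
          LinearPMap.domRestrict_apply rfl
        have hg := hgreen x' ⟨y, hya⟩
        rw [hx'p, inner_zero_left, mul_zero, zero_sub] at hg
        have hip : (inner ℂ ((x' : H)) (T.adjoint ⟨y, hya⟩) : ℂ)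
            = inner ℂ (T.adjoint x') (y : H) := by
          rw [← hval, ← hTpx]
          exact (((Tp.adjoint_isFormalAdjoint hTpdense).symm) ⟨(x' : H), hxTp⟩ ⟨y, hy⟩).symm
        rw [hip, sub_self] at hg
        have := hg.symm
        rw [neg_eq_zero, mul_eq_zero] at this
        rcases this with h | h
        · exact absurd h Complex.I_ne_zero
        · exact h
      obtain ⟨x', hx'⟩ := hsurj (0, Γm ⟨y, hya⟩)
      have hx'p : Γp x' = 0 := congrArg Prod.fst hx'
      have hx'm : Γm x' = Γm ⟨y, hya⟩ := congrArg Prod.snd hx'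
      have h0 := horth x' hx'p
      rw [hx'm, inner_self_eq_zero] at h0
      have : y ∈ Km ⊓ T.adjoint.domain := ⟨⟨⟨y, hya⟩, h0, rfl⟩, hya⟩
      rwa [hTm, LinearPMap.domRestrict_domain]
    · intro x y hxy
      have hya : (y : H) ∈ T.adjoint.domain := y.2.2
      have h1 : Tp.adjoint x = T.adjoint ⟨(y : H), hya⟩ := by
        have := hle2'.2 (x := x) (y := ⟨(y : H), hle2'.1 (hxy ▸ x.2)⟩) (by simpa using hxy)
        rw [this]
      have h2 : Tm y = T.adjoint ⟨(y : H), hya⟩ := LinearPMap.domRestrict_apply rfl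
      rw [h1, h2]
  exact le_antisymm hle2 hle1

end
end

section
/- Under the boundary triplet setup, for every λ ∈ ℂ with Im λ > 0 the map x ↦ T*x − λx is a bijection from D(T₊) onto H and satisfies ‖T*x − λx‖ ≥ (Im λ)‖x‖ for all x ∈ D(T₊); likewise, for every λ ∈ ℂ with Im λ < 0 the map x ↦ T*x − λx is a bijection from D(T₋) onto H and satisfies ‖T*x − λx‖ ≥ |Im λ|·‖x‖ for all x ∈ D(T₋). In particular the open upper half-plane is contained in the resolvent set of T₊ and the open lower half-plane in that of T₋. -/
noncomputable section

open Complex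

variable {H Hp Hm : Type*}
  [NormedAddCommGroup H] [InnerProductSpace ℂ H] [CompleteSpace H]
  [NormedAddCommGroup Hp] [InnerProductSpace ℂ Hp] [CompleteSpace Hp]
  [NormedAddCommGroup Hm] [InnerProductSpace ℂ Hm] [CompleteSpace Hm]

section KeyAux
open Filter Topology

variable {H Ha Hb : Type*} [NormedAddCommGroup H] [InnerProductSpace ℂ H] [CompleteSpace H]
  [NormedAddCommGroup Ha] [InnerProductSpace ℂ Ha]
  [NormedAddCommGroup Hb] [InnerProductSpace ℂ Hb]

theorem adj_seq_closed (T : H →ₗ.[ℂ] H) (hdense : Dense (T.domain : Set H))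
    (x : ℕ → T.adjoint.domain) (x' z : H)
    (hx : Tendsto (fun n => ((x n : H))) atTop (𝓝 x'))
    (hz : Tendsto (fun n => T.adjoint (x n)) atTop (𝓝 z)) :
    ∃ hx' : x' ∈ T.adjoint.domain, T.adjoint ⟨x', hx'⟩ = z := by
  have hFA := T.adjoint_isFormalAdjoint hdense
  have key : ∀ u : T.domain, (inner ℂ z (u : H) : ℂ) = inner ℂ x' (T u) := by
    intro u
    have h1 : Tendsto (fun n => (inner ℂ (T.adjoint (x n)) ((u : H)) : ℂ)) atTop
        (𝓝 (inner ℂ z (u : H))) := hz.inner tendsto_const_nhds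
    have h2 : Tendsto (fun n => (inner ℂ ((x n : H)) (T u) : ℂ)) atTop
        (𝓝 (inner ℂ x' (T u))) := hx.inner tendsto_const_nhds
    have : (fun n => (inner ℂ (T.adjoint (x n)) ((u : H)) : ℂ))
        = fun n => (inner ℂ ((x n : H)) (T u) : ℂ) := funext fun n => hFA (x n) u
    rw [this] at h1
    exact tendsto_nhds_unique h1 h2
  have hmem : x' ∈ T.adjoint.domain :=
    LinearPMap.mem_adjoint_domain_of_exists _ ⟨z, key⟩
  exact ⟨hmem, LinearPMap.adjoint_apply_eq hdense ⟨x', hmem⟩ key⟩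

theorem key_est (T : H →ₗ.[ℂ] H)
    (Γa : T.adjoint.domain →ₗ[ℂ] Ha) (Γb : T.adjoint.domain →ₗ[ℂ] Hb)
    (s : ℝ) (hs : s = 1 ∨ s = -1)
    (hgreen : ∀ x y : T.adjoint.domain,
      (inner ℂ ((x : H)) (T.adjoint y) : ℂ) - inner ℂ (T.adjoint x) ((y : H)) =
        (s : ℂ) * Complex.I * inner ℂ (Γa x) (Γa y) -
        (s : ℂ) * Complex.I * inner ℂ (Γb x) (Γb y))
    (lam : ℂ) (hlam : 0 < s * lam.im)
    (x : T.adjoint.domain) (hx : Γa x = 0) :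
    |lam.im| * ‖(x : H)‖ ≤ ‖T.adjoint x - lam • (x : H)‖ := by
  set c : ℂ := inner ℂ ((x : H)) (T.adjoint x) with hc
  have hg := hgreen x x
  rw [hx, inner_zero_left, mul_zero, zero_sub] at hg
  have hconj : (inner ℂ (T.adjoint x) ((x : H)) : ℂ) = (starRingEnd ℂ) c := by
    rw [hc, inner_conj_symm]
  rw [hconj] at hg
  have him : c - (starRingEnd ℂ) c = (2 * c.im : ℝ) * Complex.I := by
    rw [Complex.sub_conj]
  rw [him] at hg
  have hbb : (inner ℂ (Γb x) (Γb x) : ℂ) = ((‖Γb x‖ ^ 2 : ℝ) : ℂ) := by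
    rw [inner_self_eq_norm_sq_to_K]; norm_cast
  rw [hbb] at hg
  have him2 : 2 * c.im = -(s * ‖Γb x‖ ^ 2) := by
    have := congrArg Complex.im hg
    push_cast at this
    simpa [← Complex.ofReal_pow] using this
  set d : ℂ := inner ℂ ((x : H)) (T.adjoint x - lam • (x : H)) with hd
  have hdc : d = c - lam * ((‖(x : H)‖ ^ 2 : ℝ) : ℂ) := by
    rw [hd, inner_sub_right, inner_smul_right, hc, inner_self_eq_norm_sq_to_K]; norm_cast
  have hdim : d.im = c.im - lam.im * ‖(x : H)‖ ^ 2 := by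
    rw [hdc]; simp [Complex.sub_im, Complex.mul_im, ← Complex.ofReal_pow]
  have h1 : |lam.im| * ‖(x : H)‖ ^ 2 ≤ |d.im| := by
    have hb2 : (0 : ℝ) ≤ ‖Γb x‖ ^ 2 := sq_nonneg _
    rcases hs with h | h
    · rw [h] at him2 hlam
      rw [abs_of_pos (by linarith)]
      have habs : -d.im ≤ |d.im| := neg_le_abs d.im
      nlinarith
    · rw [h] at him2 hlam
      rw [abs_of_neg (by linarith)]
      have habs : d.im ≤ |d.im| := le_abs_self d.im
      nlinarith
  have h2 : |d.im| ≤ ‖(x : H)‖ * ‖T.adjoint x - lam • (x : H)‖ := by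
    calc |d.im| ≤ ‖d‖ := Complex.abs_im_le_norm d
    _ = ‖d‖ := rfl
    _ ≤ _ := norm_inner_le_norm _ _
  have h3 := h1.trans h2
  have hnn : (0:ℝ) ≤ ‖T.adjoint x - lam • (x : H)‖ := norm_nonneg _
  nlinarith [norm_nonneg ((x : H)), abs_nonneg lam.im]

set_option maxHeartbeats 2000000 in
theorem key_lemma (T : H →ₗ.[ℂ] H) (hdense : Dense (T.domain : Set H))
    (hle : T ≤ T.adjoint)
    (Γa : T.adjoint.domain →ₗ[ℂ] Ha) (Γb : T.adjoint.domain →ₗ[ℂ] Hb)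
    (s : ℝ) (hs : s = 1 ∨ s = -1)
    (hgreen : ∀ x y : T.adjoint.domain,
      (inner ℂ ((x : H)) (T.adjoint y) : ℂ) - inner ℂ (T.adjoint x) ((y : H)) =
        (s : ℂ) * Complex.I * inner ℂ (Γa x) (Γa y) -
        (s : ℂ) * Complex.I * inner ℂ (Γb x) (Γb y))
    (hkera : ∀ x : T.adjoint.domain, (x : H) ∈ T.domain → Γa x = 0)
    (hsurjb : ∀ b : Hb, ∃ x : T.adjoint.domain, Γa x = 0 ∧ Γb x = b)
    (hbda : ∃ C : ℝ, 0 < C ∧ ∀ x : T.adjoint.domain,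
      ‖Γa x‖ ^ 2 ≤ C * (‖(x : H)‖ ^ 2 + ‖T.adjoint x‖ ^ 2))
    (lam : ℂ) (hlam : 0 < s * lam.im) :
    (∀ x : T.adjoint.domain, Γa x = 0 →
        |lam.im| * ‖(x : H)‖ ≤ ‖T.adjoint x - lam • (x : H)‖) ∧
    (∀ y : H, ∃! x : T.adjoint.domain, Γa x = 0 ∧ T.adjoint x - lam • (x : H) = y) := by
  have est : ∀ x : T.adjoint.domain, Γa x = 0 →
      |lam.im| * ‖(x : H)‖ ≤ ‖T.adjoint x - lam • (x : H)‖ :=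
    key_est T Γa Γb s hs hgreen lam hlam
  refine ⟨est, ?_⟩
  have habs : 0 < |lam.im| := by
    rw [abs_pos]
    intro h0
    rw [h0, mul_zero] at hlam
    exact lt_irrefl 0 hlam
  set f : T.adjoint.domain →ₗ[ℂ] H := T.adjoint.toFun - lam • T.adjoint.domain.subtype
    with hfdef
  have hf : ∀ x : T.adjoint.domain, f x = T.adjoint x - lam • (x : H) := fun _ => rfl
  have estf : ∀ x : T.adjoint.domain, Γa x = 0 → |lam.im| * ‖(x : H)‖ ≤ ‖f x‖ := by
    intro x hx; rw [hf]; exact est x hx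
  set R : Submodule ℂ H := (LinearMap.ker Γa).map f with hRdef
  -- R is closed
  have hRclosed : IsClosed (R : Set H) := by
    refine IsSeqClosed.isClosed ?_
    intro u y hu hy
    choose x hxK hxf using fun n => Submodule.mem_map.mp (hu n)
    have hxa : ∀ n, Γa (x n) = 0 := fun n => LinearMap.mem_ker.mp (hxK n)
    have hcau : CauchySeq (fun n => ((x n : H))) := by
      have hucau : CauchySeq u := hy.cauchySeq
      rw [Metric.cauchySeq_iff] at hucau ⊢
      intro ε hε
      obtain ⟨N, hN⟩ := hucau (|lam.im| * ε) (by positivity)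
      refine ⟨N, fun m hm n hn => ?_⟩
      have hker : Γa (x m - x n) = 0 := by rw [map_sub, hxa, hxa, sub_zero]
      have h1 := estf (x m - x n) hker
      have h2 : f (x m - x n) = u m - u n := by rw [map_sub, hxf, hxf]
      have h3 : ((x m - x n : T.adjoint.domain) : H) = (x m : H) - (x n : H) := rfl
      rw [h2, h3] at h1
      have h4 : ‖u m - u n‖ < |lam.im| * ε := by
        rw [← dist_eq_norm]; exact hN m hm n hn
      rw [dist_eq_norm]
      nlinarith [norm_nonneg ((x m : H) - (x n : H))]
    obtain ⟨x', hx'⟩ := cauchySeq_tendsto_of_complete hcau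
    have hTlim : Tendsto (fun n => T.adjoint (x n)) atTop (𝓝 (y + lam • x')) := by
      have heq : (fun n => T.adjoint (x n)) = fun n => u n + lam • ((x n : H)) := by
        funext n
        have h5 := hxf n
        rw [hf] at h5
        rw [← h5]
        abel
      rw [heq]
      exact hy.add (hx'.const_smul lam)
    obtain ⟨hmem, hval⟩ := adj_seq_closed T hdense x x' (y + lam • x') hx' hTlim
    obtain ⟨C, hC, hCb⟩ := hbda
    set x'' : T.adjoint.domain := ⟨x', hmem⟩ with hx''
    have hga : Γa x'' = 0 := by
      have l1 : Tendsto (fun n => ‖((x n : H)) - x'‖ ^ 2) atTop (𝓝 0) := by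
        have h := ((hx'.sub (tendsto_const_nhds (x := x'))).norm.pow 2)
        simpa using h
      have l2 : Tendsto (fun n => ‖T.adjoint (x n) - (y + lam • x')‖ ^ 2) atTop (𝓝 0) := by
        have h := ((hTlim.sub (tendsto_const_nhds (x := y + lam • x'))).norm.pow 2)
        simpa using h
      have hlim : Tendsto (fun n => C * (‖((x n : H)) - x'‖ ^ 2 +
          ‖T.adjoint (x n) - (y + lam • x')‖ ^ 2)) atTop (𝓝 0) := by
        have := (l1.add l2).const_mul C
        simpa using this
      have hub : ∀ n, ‖Γa x''‖ ^ 2 ≤ C * (‖((x n : H)) - x'‖ ^ 2 +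
          ‖T.adjoint (x n) - (y + lam • x')‖ ^ 2) := by
        intro n
        have h5 := hCb (x n - x'')
        have h6 : Γa (x n - x'') = - Γa x'' := by rw [map_sub, hxa, zero_sub]
        have h7 : ((x n - x'' : T.adjoint.domain) : H) = (x n : H) - x' := rfl
        have h8 : T.adjoint (x n - x'') = T.adjoint (x n) - (y + lam • x') := by
          have : T.adjoint (x n - x'') = T.adjoint (x n) - T.adjoint x'' := map_sub _ _ _
          rw [this, hval]
        rw [h6, h7, h8] at h5
        simpa using h5
      have h9 : ‖Γa x''‖ ^ 2 ≤ 0 := ge_of_tendsto hlim (Eventually.of_forall hub)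
      have h10 : ‖Γa x''‖ = 0 := by nlinarith [norm_nonneg (Γa x''), sq_nonneg ‖Γa x''‖]
      simpa using h10
    refine Submodule.mem_map.mpr ⟨x'', LinearMap.mem_ker.mpr hga, ?_⟩
    rw [hf]
    have hcoe : ((x'' : T.adjoint.domain) : H) = x' := rfl
    rw [hval, hcoe]
    abel
  -- orthogonal complement trivial
  have hRbot : Rᗮ = ⊥ := by
    rw [Submodule.eq_bot_iff]
    intro y hy
    have hy' : ∀ x : T.adjoint.domain, Γa x = 0 →
        (inner ℂ (T.adjoint x - lam • (x : H)) y : ℂ) = 0 := by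
      intro x hx
      exact (Submodule.mem_orthogonal R y).mp hy _
        (Submodule.mem_map.mpr ⟨x, LinearMap.mem_ker.mpr hx, rfl⟩)
    have hyadj : ∀ u : T.domain,
        (inner ℂ ((starRingEnd ℂ lam) • y) ((u : H)) : ℂ) = inner ℂ y (T u) := by
      intro u
      set w : T.adjoint.domain := ⟨(u : H), hle.1 u.2⟩ with hw
      have hTu : T u = T.adjoint w := hle.2 rfl
      have h0 := hy' w (hkera w u.2)
      rw [inner_sub_left, sub_eq_zero] at h0
      have hcoe : ((w : T.adjoint.domain) : H) = (u : H) := rfl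
      rw [hcoe] at h0
      have e1 : (inner ℂ ((starRingEnd ℂ lam) • y) ((u : H)) : ℂ) = lam * inner ℂ y ((u : H)) := by
        rw [inner_smul_left, Complex.conj_conj]
      have e2 : (inner ℂ y (T.adjoint w) : ℂ) = lam * inner ℂ y ((u : H)) := by
        rw [← inner_conj_symm, h0, inner_smul_left, map_mul, Complex.conj_conj,
          inner_conj_symm]
      rw [e1, hTu, e2]
    have hymem : y ∈ T.adjoint.domain :=
      LinearPMap.mem_adjoint_domain_of_exists _ ⟨(starRingEnd ℂ lam) • y, hyadj⟩
    set yv : T.adjoint.domain := ⟨y, hymem⟩ with hyv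
    have hycoe : ((yv : T.adjoint.domain) : H) = y := rfl
    have hTy : T.adjoint yv = (starRingEnd ℂ lam) • y :=
      LinearPMap.adjoint_apply_eq hdense yv hyadj
    have hsne : (s : ℂ) ≠ 0 := by rcases hs with h | h <;> rw [h] <;> norm_num
    have hbo : ∀ x : T.adjoint.domain, Γa x = 0 → (inner ℂ (Γb x) (Γb yv) : ℂ) = 0 := by
      intro x hx
      have hg := hgreen x yv
      rw [hx, inner_zero_left, mul_zero, zero_sub, hTy, hycoe] at hg
      have h0 := hy' x hx
      rw [inner_sub_left, sub_eq_zero] at h0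
      have hL : (inner ℂ ((x : H)) ((starRingEnd ℂ lam) • y) : ℂ) - inner ℂ (T.adjoint x) y
          = 0 := by
        rw [inner_smul_right, h0, inner_smul_left]; ring
      rw [hL] at hg
      have h4 : (s : ℂ) * Complex.I * inner ℂ (Γb x) (Γb yv) = 0 := by
        have := hg.symm
        rwa [neg_eq_zero] at this
      simpa [mul_eq_zero, hsne, Complex.I_ne_zero] using h4
    obtain ⟨x0, hx0a, hx0b⟩ := hsurjb (Γb yv)
    have hbz : Γb yv = 0 := by
      have h5 := hbo x0 hx0a
      rw [hx0b] at h5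
      exact inner_self_eq_zero.mp h5
    have hg := hgreen yv yv
    rw [hbz, inner_zero_left, mul_zero, sub_zero, hTy, hycoe] at hg
    rw [inner_smul_right, inner_smul_left, Complex.conj_conj,
      inner_self_eq_norm_sq_to_K, inner_self_eq_norm_sq_to_K] at hg
    have himg := congrArg Complex.im hg
    simp [Complex.sub_im, Complex.mul_im, Complex.mul_re, Complex.conj_re, Complex.conj_im,
      ← Complex.ofReal_pow] at himg
    have hsq : ‖y‖ ^ 2 ≤ 0 := by
      rcases hs with h | h <;> rw [h] at hlam himg <;> nlinarith [sq_nonneg ‖Γa yv‖]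
    have hny : ‖y‖ = 0 :=
      le_antisymm (by nlinarith [norm_nonneg y]) (norm_nonneg y)
    simpa using hny
  haveI : CompleteSpace R := hRclosed.completeSpace_coe
  have hRtop : R = ⊤ := Submodule.orthogonal_eq_bot_iff.mp hRbot
  intro y
  have hyR : y ∈ R := by rw [hRtop]; exact Submodule.mem_top
  obtain ⟨x, hxK, hxf⟩ := Submodule.mem_map.mp hyR
  have hxf' : T.adjoint x - lam • (x : H) = y := by rw [← hf]; exact hxf
  refine ⟨x, ⟨LinearMap.mem_ker.mp hxK, hxf'⟩, ?_⟩
  rintro x₂ ⟨hx₂a, hx₂f⟩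
  have hker : Γa (x₂ - x) = 0 := by
    rw [map_sub, hx₂a, LinearMap.mem_ker.mp hxK, sub_zero]
  have h1 := est (x₂ - x) hker
  have hcoe : ((x₂ - x : T.adjoint.domain) : H) = (x₂ : H) - (x : H) := rfl
  have h2 : T.adjoint (x₂ - x) - lam • ((x₂ - x : T.adjoint.domain) : H) = 0 := by
    have hms : T.adjoint (x₂ - x) = T.adjoint x₂ - T.adjoint x := map_sub _ _ _
    rw [hms, hcoe, smul_sub]
    rw [sub_sub_sub_comm, hx₂f, hxf', sub_self]
  rw [h2, hcoe] at h1
  have h3 : ‖(x₂ : H) - (x : H)‖ = 0 := by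
    simp only [norm_zero] at h1
    nlinarith [norm_nonneg ((x₂ : H) - (x : H))]
  have h4 : ((x₂ : H)) = (x : H) := by
    rwa [norm_sub_eq_zero_iff] at h3
  exact Subtype.ext h4

end KeyAux

/-- Under the boundary triplet setup, for `Im λ > 0` the map `x ↦ T*x − λx` is a bijection
from `D(T₊) = {x ∈ D(T*) : Γ₊x = 0}` onto `H` with `‖T*x − λx‖ ≥ (Im λ)‖x‖`; and for
`Im λ < 0` it is a bijection from `D(T₋) = {x ∈ D(T*) : Γ₋x = 0}` onto `H` with
`‖T*x − λx‖ ≥ |Im λ|‖x‖`.  In particular `ℂ₊ ⊆ ρ(T₊)` and `ℂ₋ ⊆ ρ(T₋)`. -/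
theorem statement9 (T : H →ₗ.[ℂ] H)
    (hdense : Dense (T.domain : Set H))
    (hclosed : IsClosed (T.graph : Set (H × H)))
    (hsymm : ∀ x y : T.domain, (inner ℂ (T x) ((y : H)) : ℂ) = inner ℂ ((x : H)) (T y))
    (Γp : T.adjoint.domain →ₗ[ℂ] Hp) (Γm : T.adjoint.domain →ₗ[ℂ] Hm)
    (hsurj : Function.Surjective fun x : T.adjoint.domain => (Γp x, Γm x))
    (hker : ∀ x : T.adjoint.domain, (Γp x = 0 ∧ Γm x = 0) ↔ (x : H) ∈ T.domain)
    (hbound : ∃ C : ℝ, 0 < C ∧ ∀ x : T.adjoint.domain,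
      ‖Γp x‖ ^ 2 + ‖Γm x‖ ^ 2 ≤ C * (‖(x : H)‖ ^ 2 + ‖T.adjoint x‖ ^ 2))
    (hgreen : ∀ x y : T.adjoint.domain,
      (inner ℂ ((x : H)) (T.adjoint y) : ℂ) - inner ℂ (T.adjoint x) ((y : H)) =
        Complex.I * inner ℂ (Γp x) (Γp y) - Complex.I * inner ℂ (Γm x) (Γm y)) :
    (∀ lam : ℂ, 0 < lam.im →
      (∀ x : T.adjoint.domain, Γp x = 0 →
        lam.im * ‖(x : H)‖ ≤ ‖T.adjoint x - lam • (x : H)‖) ∧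
      (∀ y : H, ∃! x : T.adjoint.domain, Γp x = 0 ∧ T.adjoint x - lam • (x : H) = y)) ∧
    (∀ lam : ℂ, lam.im < 0 →
      (∀ x : T.adjoint.domain, Γm x = 0 →
        |lam.im| * ‖(x : H)‖ ≤ ‖T.adjoint x - lam • (x : H)‖) ∧
      (∀ y : H, ∃! x : T.adjoint.domain, Γm x = 0 ∧ T.adjoint x - lam • (x : H) = y)) := by
  have hFA : T.IsFormalAdjoint T := hsymm
  have hle : T ≤ T.adjoint := hFA.le_adjoint hdense
  constructor
  · intro lam hlam
    have hgreen' : ∀ x y : T.adjoint.domain,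
        (inner ℂ ((x : H)) (T.adjoint y) : ℂ) - inner ℂ (T.adjoint x) ((y : H)) =
          ((1 : ℝ) : ℂ) * Complex.I * inner ℂ (Γp x) (Γp y) -
          ((1 : ℝ) : ℂ) * Complex.I * inner ℂ (Γm x) (Γm y) := by
      intro x y; rw [hgreen]; push_cast; ring
    have hkera : ∀ x : T.adjoint.domain, (x : H) ∈ T.domain → Γp x = 0 :=
      fun x hx => ((hker x).mpr hx).1
    have hsurjb : ∀ b : Hm, ∃ x : T.adjoint.domain, Γp x = 0 ∧ Γm x = b := by
      intro b
      obtain ⟨x, hx⟩ := hsurj (0, b)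
      exact ⟨x, congrArg Prod.fst hx, congrArg Prod.snd hx⟩
    have hbda : ∃ C : ℝ, 0 < C ∧ ∀ x : T.adjoint.domain,
        ‖Γp x‖ ^ 2 ≤ C * (‖(x : H)‖ ^ 2 + ‖T.adjoint x‖ ^ 2) := by
      obtain ⟨C, hC, hCb⟩ := hbound
      exact ⟨C, hC, fun x => by nlinarith [hCb x, sq_nonneg ‖Γm x‖]⟩
    have h := key_lemma T hdense hle Γp Γm 1 (Or.inl rfl) hgreen' hkera hsurjb hbda lam
      (by simpa using hlam)
    refine ⟨fun x hx => ?_, h.2⟩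
    have h1 := h.1 x hx
    rwa [abs_of_pos hlam] at h1
  · intro lam hlam
    have hgreen' : ∀ x y : T.adjoint.domain,
        (inner ℂ ((x : H)) (T.adjoint y) : ℂ) - inner ℂ (T.adjoint x) ((y : H)) =
          ((-1 : ℝ) : ℂ) * Complex.I * inner ℂ (Γm x) (Γm y) -
          ((-1 : ℝ) : ℂ) * Complex.I * inner ℂ (Γp x) (Γp y) := by
      intro x y; rw [hgreen]; push_cast; ring
    have hkera : ∀ x : T.adjoint.domain, (x : H) ∈ T.domain → Γm x = 0 :=
      fun x hx => ((hker x).mpr hx).2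
    have hsurjb : ∀ b : Hp, ∃ x : T.adjoint.domain, Γm x = 0 ∧ Γp x = b := by
      intro b
      obtain ⟨x, hx⟩ := hsurj (b, 0)
      exact ⟨x, congrArg Prod.snd hx, congrArg Prod.fst hx⟩
    have hbda : ∃ C : ℝ, 0 < C ∧ ∀ x : T.adjoint.domain,
        ‖Γm x‖ ^ 2 ≤ C * (‖(x : H)‖ ^ 2 + ‖T.adjoint x‖ ^ 2) := by
      obtain ⟨C, hC, hCb⟩ := hbound
      exact ⟨C, hC, fun x => by nlinarith [hCb x, sq_nonneg ‖Γp x‖]⟩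
    exact key_lemma T hdense hle Γm Γp (-1) (Or.inr rfl) hgreen' hkera hsurjb hbda lam
      (by nlinarith)

end
end

section
/- Under the boundary triplet setup, for every φ ∈ H₊ and every λ ∈ ℂ with Im λ > 0, the abstract boundary value problem T*x = λx, Γ₊x = φ has exactly one solution x ∈ D(T*). -/
noncomputable section

open Complex

variable {H Hp Hm : Type*}
  [NormedAddCommGroup H] [InnerProductSpace ℂ H] [CompleteSpace H]
  [NormedAddCommGroup Hp] [InnerProductSpace ℂ Hp] [CompleteSpace Hp]
  [NormedAddCommGroup Hm] [InnerProductSpace ℂ Hm] [CompleteSpace Hm]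

set_option linter.unusedSectionVars false
set_option maxHeartbeats 1000000

lemma aux_mem (T : H →ₗ.[ℂ] H) (hdense : Dense (T.domain : Set H)) (v w : H)
    (h : ∀ x : T.domain, (inner ℂ ((x : H)) w : ℂ) = inner ℂ (T x) v) :
    ∃ hv : v ∈ T.adjoint.domain, T.adjoint ⟨v, hv⟩ = w := by
  have h' : ∀ x : T.domain, (inner ℂ w ((x : H)) : ℂ) = inner ℂ v (T x) := by
    intro x
    have := congrArg (starRingEnd ℂ) (h x)
    simpa [inner_conj_symm] using this
  have hv : v ∈ T.adjoint.domain :=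
    LinearPMap.mem_adjoint_domain_of_exists v ⟨w, fun x => h' x⟩
  exact ⟨hv, LinearPMap.adjoint_apply_eq hdense ⟨v, hv⟩ (fun x => h' x)⟩

lemma aux_graph_closed (T : H →ₗ.[ℂ] H) (hdense : Dense (T.domain : Set H)) :
    IsClosed (T.adjoint.graph : Set (H × H)) := by
  have hform := LinearPMap.adjoint_isFormalAdjoint hdense
  have hset : (T.adjoint.graph : Set (H × H)) =
      ⋂ x : T.domain, {p : H × H | (inner ℂ (T x) p.1 : ℂ) = inner ℂ ((x : H)) p.2} := by
    ext p
    simp only [Set.mem_iInter, Set.mem_setOf_eq, SetLike.mem_coe, LinearPMap.mem_graph_iff]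
    constructor
    · rintro ⟨y, hy1, hy2⟩ x
      have := hform y x
      have h2 := congrArg (starRingEnd ℂ) this
      rw [inner_conj_symm, inner_conj_symm] at h2
      rw [← hy1, ← hy2, ← h2]
    · intro hx
      obtain ⟨hv, heq⟩ := aux_mem T hdense p.1 p.2 (fun x => (hx x).symm)
      exact ⟨⟨p.1, hv⟩, rfl, heq⟩
  rw [hset]
  exact isClosed_iInter fun x => isClosed_eq
    ((continuous_const.inner (continuous_fst)))
    ((continuous_const.inner (continuous_snd)))

lemma aux_im (T : H →ₗ.[ℂ] H)
    (Γp : T.adjoint.domain →ₗ[ℂ] Hp) (Γm : T.adjoint.domain →ₗ[ℂ] Hm)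
    (hgreen : ∀ x y : T.adjoint.domain,
      (inner ℂ ((x : H)) (T.adjoint y) : ℂ) - inner ℂ (T.adjoint x) ((y : H)) =
        Complex.I * inner ℂ (Γp x) (Γp y) - Complex.I * inner ℂ (Γm x) (Γm y))
    (x : T.adjoint.domain) :
    2 * (inner ℂ ((x : H)) (T.adjoint x) : ℂ).im = ‖Γp x‖ ^ 2 - ‖Γm x‖ ^ 2 := by
  have h := hgreen x x
  rw [inner_self_eq_norm_sq_to_K (𝕜 := ℂ) (Γp x), inner_self_eq_norm_sq_to_K (𝕜 := ℂ) (Γm x)] at h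
  have him := congrArg Complex.im h
  have hsym : (inner ℂ (T.adjoint x) ((x : H)) : ℂ).im = - (inner ℂ ((x : H)) (T.adjoint x) : ℂ).im := by
    rw [← inner_conj_symm (T.adjoint x) ((x : H)), Complex.conj_im]
  simp only [Complex.sub_im, Complex.mul_im, Complex.I_re, Complex.I_im, ← Complex.ofReal_pow,
    Complex.ofReal_re, Complex.ofReal_im, hsym] at him
  norm_cast at him
  simp only [show (Algebra.cast : ℝ → ℂ) = ((↑) : ℝ → ℂ) from Complex.coe_algebraMap,
    Complex.ofReal_re, Complex.ofReal_im, zero_mul, one_mul, zero_add] at him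
  linarith

lemma aux_inner_smul_im (lam : ℂ) (x y : H) (h : y = lam • x) :
    (inner ℂ x y : ℂ).im = lam.im * ‖x‖ ^ 2 := by
  rw [h, inner_smul_right, inner_self_eq_norm_sq_to_K (𝕜 := ℂ)]
  simp only [show (Algebra.cast : ℝ → ℂ) = ((↑) : ℝ → ℂ) from Complex.coe_algebraMap,
    Complex.mul_im, ← Complex.ofReal_pow, Complex.ofReal_re, Complex.ofReal_im]
  ring

lemma aux_key1 (T : H →ₗ.[ℂ] H)
    (Γp : T.adjoint.domain →ₗ[ℂ] Hp) (Γm : T.adjoint.domain →ₗ[ℂ] Hm)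
    (him : ∀ x : T.adjoint.domain,
      2 * (inner ℂ ((x : H)) (T.adjoint x) : ℂ).im = ‖Γp x‖ ^ 2 - ‖Γm x‖ ^ 2)
    (lam : ℂ) (hlam : 0 < lam.im)
    (x : T.adjoint.domain) (hx : T.adjoint x = lam • (x : H)) (hp : Γp x = 0) :
    (x : H) = 0 := by
  have h1 := him x
  rw [aux_inner_smul_im lam ((x : H)) (T.adjoint x) hx, hp] at h1
  simp only [norm_zero] at h1
  have hsq : ‖(x : H)‖ ^ 2 ≤ 0 := by nlinarith [sq_nonneg ‖Γm x‖]
  have hsq0 : ‖(x : H)‖ ^ 2 = 0 := le_antisymm hsq (sq_nonneg _)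
  have : ‖(x : H)‖ = 0 := by
    have := pow_eq_zero_iff (n := 2) (by norm_num) |>.mp hsq0
    exact this
  simpa using this

lemma aux_key2 (T : H →ₗ.[ℂ] H)
    (Γp : T.adjoint.domain →ₗ[ℂ] Hp) (Γm : T.adjoint.domain →ₗ[ℂ] Hm)
    (him : ∀ x : T.adjoint.domain,
      2 * (inner ℂ ((x : H)) (T.adjoint x) : ℂ).im = ‖Γp x‖ ^ 2 - ‖Γm x‖ ^ 2)
    (lam : ℂ)
    (x : T.adjoint.domain) (hp : Γp x = 0) :
    lam.im * ‖(x : H)‖ ^ 2 ≤ ‖(x : H)‖ * ‖T.adjoint x - lam • (x : H)‖ := by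
  have h1 := him x
  rw [hp] at h1
  simp only [norm_zero] at h1
  have h2 : (inner ℂ ((x : H)) (T.adjoint x) : ℂ).im ≤ 0 := by nlinarith [sq_nonneg ‖Γm x‖]
  set z : ℂ := inner ℂ ((x : H)) (T.adjoint x - lam • (x : H)) with hz
  have hzim : z.im = (inner ℂ ((x : H)) (T.adjoint x) : ℂ).im - lam.im * ‖(x : H)‖ ^ 2 := by
    rw [hz, inner_sub_right]
    rw [Complex.sub_im, aux_inner_smul_im lam ((x : H)) (lam • (x : H)) rfl]
  have habs : |z.im| ≤ ‖(x : H)‖ * ‖T.adjoint x - lam • (x : H)‖ := by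
    calc |z.im| ≤ ‖z‖ := Complex.abs_im_le_norm z
    _ = ‖z‖ := rfl
    _ ≤ ‖(x : H)‖ * ‖T.adjoint x - lam • (x : H)‖ := norm_inner_le_norm _ _
  have hle : lam.im * ‖(x : H)‖ ^ 2 ≤ -z.im := by rw [hzim]; linarith
  calc lam.im * ‖(x : H)‖ ^ 2 ≤ -z.im := hle
  _ ≤ |z.im| := neg_le_abs z.im
  _ ≤ _ := habs

/-- Under the boundary triplet setup, for every `φ ∈ H₊` and every `λ` with `Im λ > 0`,
the abstract boundary value problem `T*x = λx, Γ₊x = φ` has exactly one solution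
`x ∈ D(T*)`. -/
theorem statement10 (T : H →ₗ.[ℂ] H)
    (hdense : Dense (T.domain : Set H))
    (hclosed : IsClosed (T.graph : Set (H × H)))
    (hsymm : ∀ x y : T.domain, (inner ℂ (T x) ((y : H)) : ℂ) = inner ℂ ((x : H)) (T y))
    (Γp : T.adjoint.domain →ₗ[ℂ] Hp) (Γm : T.adjoint.domain →ₗ[ℂ] Hm)
    (hsurj : Function.Surjective fun x : T.adjoint.domain => (Γp x, Γm x))
    (hker : ∀ x : T.adjoint.domain, (Γp x = 0 ∧ Γm x = 0) ↔ (x : H) ∈ T.domain)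
    (hbound : ∃ C : ℝ, 0 < C ∧ ∀ x : T.adjoint.domain,
      ‖Γp x‖ ^ 2 + ‖Γm x‖ ^ 2 ≤ C * (‖(x : H)‖ ^ 2 + ‖T.adjoint x‖ ^ 2))
    (hgreen : ∀ x y : T.adjoint.domain,
      (inner ℂ ((x : H)) (T.adjoint y) : ℂ) - inner ℂ (T.adjoint x) ((y : H)) =
        Complex.I * inner ℂ (Γp x) (Γp y) - Complex.I * inner ℂ (Γm x) (Γm y))
    (φ : Hp) (lam : ℂ) (hlam : 0 < lam.im) :
    ∃! x : T.adjoint.domain, T.adjoint x = lam • (x : H) ∧ Γp x = φ := by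
  obtain ⟨C, hC, hb⟩ := hbound
  have hmem := aux_mem T hdense
  have hgraphS := aux_graph_closed T hdense
  have him := aux_im T Γp Γm hgreen
  set L : T.adjoint.domain →ₗ[ℂ] H := T.adjoint.toFun - lam • T.adjoint.domain.subtype with hLdef
  have hLapp : ∀ x : T.adjoint.domain, L x = T.adjoint x - lam • (x : H) := fun x => rfl
  set R : Submodule ℂ H := (LinearMap.ker Γp).map L with hRdef
  have hmemR : ∀ y : H, y ∈ R ↔ ∃ x : T.adjoint.domain, Γp x = 0 ∧ L x = y := by
    intro y
    constructor
    · rintro ⟨x, hx, rfl⟩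
      exact ⟨x, LinearMap.mem_ker.mp hx, rfl⟩
    · rintro ⟨x, hx, rfl⟩
      exact ⟨x, LinearMap.mem_ker.mpr hx, rfl⟩
  -- closedness of R
  have hclosedR : IsClosed (R : Set H) := by
    apply IsSeqClosed.isClosed
    intro u y hu huy
    choose x hx1 hx2 using fun n => (hmemR (u n)).mp (hu n)
    have hcu : CauchySeq u := huy.cauchySeq
    have hxc : CauchySeq (fun n => ((x n : H))) := by
      rw [Metric.cauchySeq_iff]
      intro ε hε
      obtain ⟨N, hN⟩ := Metric.cauchySeq_iff.mp hcu (lam.im * ε) (by positivity)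
      refine ⟨N, fun m hm n hn => ?_⟩
      have hd := hN m hm n hn
      have hγ : Γp (x m - x n) = 0 := by rw [map_sub, hx1 m, hx1 n, sub_zero]
      have hk := aux_key2 T Γp Γm him lam (x m - x n) hγ
      have hL2 : T.adjoint (x m - x n) - lam • ((x m - x n : T.adjoint.domain) : H)
          = u m - u n := by
        rw [← hLapp, map_sub, hx2 m, hx2 n]
      rw [hL2] at hk
      rw [dist_eq_norm] at hd ⊢
      have hcoe : ((x m : H)) - ((x n : H)) = (((x m - x n : T.adjoint.domain)) : H) := rfl
      rw [hcoe]
      rcases eq_or_lt_of_le (norm_nonneg (((x m - x n : T.adjoint.domain)) : H)) with h0 | hpos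
      · rw [← h0]; exact hε
      · nlinarith [hk, mul_lt_mul_of_pos_left hd hpos, mul_pos hlam hpos]
    obtain ⟨a, ha⟩ := cauchySeq_tendsto_of_complete hxc
    have hSapp : ∀ n, T.adjoint (x n) = u n + lam • ((x n : H)) := by
      intro n
      have h := hx2 n
      rw [hLapp] at h
      exact sub_eq_iff_eq_add.mp h
    have hSx : Filter.Tendsto (fun n => T.adjoint (x n)) Filter.atTop (nhds (y + lam • a)) := by
      have h1 : Filter.Tendsto (fun n => u n + lam • ((x n : H))) Filter.atTop
          (nhds (y + lam • a)) := huy.add (ha.const_smul lam)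
      exact h1.congr (fun n => (hSapp n).symm)
    have hmemgraph : (a, y + lam • a) ∈ T.adjoint.graph := by
      have hten : Filter.Tendsto (fun n => (((x n : H)), T.adjoint (x n))) Filter.atTop
          (nhds (a, y + lam • a)) := ha.prodMk_nhds hSx
      exact hgraphS.mem_of_tendsto hten
        (Filter.Eventually.of_forall fun n => T.adjoint.mem_graph (x n))
    rw [LinearPMap.mem_graph_iff] at hmemgraph
    obtain ⟨z, hz1, hz2⟩ := hmemgraph
    simp only at hz1 hz2
    -- limits of differences
    have hda : Filter.Tendsto (fun n => ((x n : H)) - a) Filter.atTop (nhds 0) := by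
      simpa using ha.sub (tendsto_const_nhds (x := a))
    have hdb : Filter.Tendsto (fun n => T.adjoint (x n) - (y + lam • a)) Filter.atTop (nhds 0) := by
      simpa using hSx.sub (tendsto_const_nhds (x := y + lam • a))
    have hten0 : Filter.Tendsto
        (fun n => C * (‖((x n : H)) - a‖ ^ 2 + ‖T.adjoint (x n) - (y + lam • a)‖ ^ 2))
        Filter.atTop (nhds 0) := by
      have := (((hda.norm.pow 2).add (hdb.norm.pow 2)).const_mul C)
      simpa using this
    have hbnd : ∀ n, ‖Γp z‖ ^ 2 ≤
        C * (‖((x n : H)) - a‖ ^ 2 + ‖T.adjoint (x n) - (y + lam • a)‖ ^ 2) := by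
      intro n
      have hbn := hb (z - x n)
      have hc1 : ((z - x n : T.adjoint.domain) : H) = a - ((x n : H)) := by
        rw [← hz1]; rfl
      have hc2 : T.adjoint (z - x n) = (y + lam • a) - T.adjoint (x n) := by
        rw [LinearPMap.map_sub, hz2]
      have hc3 : Γp (z - x n) = Γp z := by rw [map_sub, hx1 n, sub_zero]
      rw [hc1, hc2, hc3, norm_sub_rev (a), norm_sub_rev (y + lam • a)] at hbn
      nlinarith [sq_nonneg ‖Γm (z - x n)‖]
    have hle0 : ‖Γp z‖ ^ 2 ≤ 0 := ge_of_tendsto hten0 (Filter.Eventually.of_forall hbnd)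
    have hΓpz : Γp z = 0 := by
      have : ‖Γp z‖ = 0 := by nlinarith [norm_nonneg (Γp z), sq_nonneg ‖Γp z‖]
      simpa using this
    refine (hmemR y).mpr ⟨z, hΓpz, ?_⟩
    rw [hLapp, hz2, hz1]
    abel
  -- density of R
  have hdenseR : Rᗮ = ⊥ := by
    rw [Submodule.eq_bot_iff]
    intro v hv
    rw [Submodule.mem_orthogonal] at hv
    have hTsub : ∀ xt : T.domain, ∃ hx : ((xt : H)) ∈ T.adjoint.domain,
        T.adjoint ⟨(xt : H), hx⟩ = T xt ∧ Γp ⟨(xt : H), hx⟩ = 0 := by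
      intro xt
      obtain ⟨hx, heq⟩ := hmem ((xt : H)) (T xt) (fun zz => (hsymm zz xt).symm)
      have hker' := (hker ⟨(xt : H), hx⟩).mpr xt.2
      exact ⟨hx, heq, hker'.1⟩
    have hcond : ∀ xt : T.domain,
        (inner ℂ ((xt : H)) (((starRingEnd ℂ lam) • v)) : ℂ) = inner ℂ (T xt) v := by
      intro xt
      obtain ⟨hx, heqS, hΓp0⟩ := hTsub xt
      have hinR : T xt - lam • ((xt : H)) ∈ R := by
        refine (hmemR _).mpr ⟨⟨(xt : H), hx⟩, hΓp0, ?_⟩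
        rw [hLapp, heqS]
      have h0 := hv _ hinR
      rw [inner_sub_left, inner_smul_left, sub_eq_zero] at h0
      rw [inner_smul_right]
      exact h0.symm
    obtain ⟨hvdom, hSv⟩ := hmem v ((starRingEnd ℂ lam) • v) hcond
    set v' : T.adjoint.domain := ⟨v, hvdom⟩ with hv'def
    have hΓmv : Γm v' = 0 := by
      obtain ⟨xx, hxx⟩ := hsurj (0, Γm v')
      have hxp : Γp xx = 0 := congrArg Prod.fst hxx
      have hxm : Γm xx = Γm v' := congrArg Prod.snd hxx
      have hinR : L xx ∈ R := (hmemR _).mpr ⟨xx, hxp, rfl⟩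
      have h0 := hv _ hinR
      rw [hLapp xx, inner_sub_left, inner_smul_left, sub_eq_zero] at h0
      have hg := hgreen xx v'
      rw [hxp, hSv, inner_smul_right, hxm] at hg
      simp only [inner_zero_left, mul_zero, zero_sub] at hg
      rw [h0] at hg
      simp only [sub_self] at hg
      have hinner : (inner ℂ (Γm v') (Γm v') : ℂ) = 0 := by
        field_simp at hg
        exact (mul_eq_zero.mp (neg_eq_zero.mp hg.symm)).resolve_left Complex.I_ne_zero
      exact inner_self_eq_zero.mp hinner
    have h2 := him v'
    rw [hΓmv] at h2
    simp only [norm_zero] at h2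
    have h3 : (inner ℂ v (T.adjoint v') : ℂ).im = - lam.im * ‖v‖ ^ 2 := by
      have := aux_inner_smul_im ((starRingEnd ℂ) lam) v (T.adjoint v') hSv
      simpa [Complex.conj_im] using this
    have h2' : 2 * (inner ℂ v (T.adjoint v') : ℂ).im = ‖Γp v'‖ ^ 2 - 0 ^ 2 := h2
    have hsq : ‖v‖ ^ 2 ≤ 0 := by nlinarith [sq_nonneg ‖Γp v'‖]
    have hsq0 : ‖v‖ ^ 2 = 0 := le_antisymm hsq (sq_nonneg _)
    have hvnorm : ‖v‖ = 0 := pow_eq_zero_iff (n := 2) (by norm_num) |>.mp hsq0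
    simpa using hvnorm
  haveI : CompleteSpace R := hclosedR.completeSpace_coe
  have hRtop : R = ⊤ := Submodule.orthogonal_eq_bot_iff.mp hdenseR
  -- existence
  obtain ⟨u, hu⟩ := hsurj (φ, 0)
  have hup : Γp u = φ := congrArg Prod.fst hu
  have hLuR : L u ∈ R := by rw [hRtop]; trivial
  obtain ⟨w, hw1, hw2⟩ := (hmemR (L u)).mp hLuR
  have hsol1 : T.adjoint (u - w) = lam • ((u - w : T.adjoint.domain) : H) := by
    have h := sub_eq_zero.mpr hw2.symm
    rw [← map_sub] at h
    rw [hLapp] at h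
    exact sub_eq_zero.mp h
  have hsol2 : Γp (u - w) = φ := by rw [map_sub, hup, hw1, sub_zero]
  refine ⟨u - w, ⟨hsol1, hsol2⟩, ?_⟩
  rintro y ⟨hy1, hy2⟩
  have hdγ : Γp (y - (u - w)) = 0 := by rw [map_sub, hy2, hsol2, sub_self]
  have hdS : T.adjoint (y - (u - w)) = lam • ((y - (u - w) : T.adjoint.domain) : H) := by
    rw [LinearPMap.map_sub, hy1, hsol1, ← smul_sub]
    rfl
  have hz := aux_key1 T Γp Γm him lam hlam _ hdS hdγ
  have : y - (u - w) = 0 := Subtype.ext (by simpa using hz)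
  exact sub_eq_zero.mp this


end
end

section
/- Let H be a complex Hilbert space, T a densely defined closed symmetric operator in H with adjoint T*, and let T̃ be a closed extension of T with T ⊆ T̃ ⊆ T*. Let λ₀ ∈ ℂ be a point of regular type for T. Then the map x ↦ T*x − λ₀x is a bijection from D(T̃) onto H if and only if D(T̃) and ker(T* − λ₀) are transversal in D(T*), i.e. D(T̃) ∩ ker(T* − λ₀) = {0} and D(T̃) + ker(T* − λ₀) = D(T*). -/
set_option maxHeartbeats 1000000


noncomputable section

open Complex

variable {H : Type*} [NormedAddCommGroup H] [InnerProductSpace ℂ H] [CompleteSpace H]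

/-- The subspace `ker(T* − λ) = {x ∈ D(T*) : T*x = λx}` of `H`, for a densely defined
operator `T`. -/
def defect (T : H →ₗ.[ℂ] H) (lam : ℂ) : Submodule ℂ H :=
  Submodule.map T.adjoint.domain.subtype
    (LinearMap.ker (T.adjoint.toFun - lam • T.adjoint.domain.subtype))

local notation "⟪" x ", " y "⟫" => @inner ℂ _ _ x y

-- norms of (T - λ)x and (T - λ̄)x agree for symmetric T
lemma norm_conj_eq (T : H →ₗ.[ℂ] H)
    (hsymm : ∀ x y : T.domain, (inner ℂ (T x) ((y : H)) : ℂ) = inner ℂ ((x : H)) (T y))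
    (lam0 : ℂ) (z : T.domain) :
    ‖T z - (starRingEnd ℂ lam0) • (z : H)‖ = ‖T z - lam0 • (z : H)‖ := by
  have hreal : (starRingEnd ℂ) ⟪T z, (z : H)⟫ = ⟪T z, (z : H)⟫ := by
    rw [inner_conj_symm, hsymm z z]
  have key : ∀ mu : ℂ, ‖T z - mu • (z : H)‖ ^ 2
      = ‖T z‖ ^ 2 - 2 * (mu.re * (⟪T z, (z : H)⟫).re) + ‖mu • (z : H)‖ ^ 2 := by
    intro mu
    rw [@norm_sub_sq ℂ]
    congr 2
    have him : (⟪T z, (z : H)⟫).im = 0 := by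
      have := congrArg Complex.im hreal
      simp only [Complex.conj_im] at this
      linarith
    rw [inner_smul_right, RCLike.re_to_complex, Complex.mul_re, him]
    ring
  have h2 : ‖T z - (starRingEnd ℂ lam0) • (z : H)‖ ^ 2 = ‖T z - lam0 • (z : H)‖ ^ 2 := by
    rw [key, key]
    simp [norm_smul]
  have := congrArg Real.sqrt h2
  rwa [Real.sqrt_sq (norm_nonneg _), Real.sqrt_sq (norm_nonneg _)] at this

lemma surj_aux (T : H →ₗ.[ℂ] H)
    (hdense : Dense (T.domain : Set H))
    (hclosed : IsClosed (T.graph : Set (H × H)))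
    (hsymm : ∀ x y : T.domain, (inner ℂ (T x) ((y : H)) : ℂ) = inner ℂ ((x : H)) (T y))
    (lam0 : ℂ)
    (hreg : ∃ c : ℝ, 0 < c ∧ ∀ x : T.domain, c * ‖(x : H)‖ ≤ ‖T x - lam0 • (x : H)‖) :
    ∀ y : H, ∃ x : T.adjoint.domain, T.adjoint x - lam0 • (x : H) = y := by
  obtain ⟨c, hc, hb⟩ := hreg
  set mu := (starRingEnd ℂ) lam0 with hmu
  -- the operator A = T - μ on D(T)
  set A : T.domain →ₗ[ℂ] H :=
    { toFun := fun z => T z - mu • (z : H)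
      map_add' := fun z w => by
        simp only [LinearPMap.map_add, Submodule.coe_add, smul_add]
        abel
      map_smul' := fun a z => by
        simp only [LinearPMap.map_smul, SetLike.val_smul, RingHom.id_apply, smul_sub,
          smul_comm a mu] } with hA
  have hAapp : ∀ z : T.domain, A z = T z - mu • (z : H) := fun z => rfl
  have hb' : ∀ z : T.domain, c * ‖(z : H)‖ ≤ ‖A z‖ := by
    intro z
    rw [hAapp, norm_conj_eq T hsymm lam0 z]
    exact hb z
  have hinj : Function.Injective A := by
    intro z w hzw
    have h0 : A (z - w) = 0 := by rw [map_sub, hzw, sub_self]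
    have := hb' (z - w)
    rw [h0, norm_zero] at this
    have : ‖((z - w : T.domain) : H)‖ ≤ 0 := by
      nlinarith [norm_nonneg ((z - w : T.domain) : H)]
    have hz : ((z - w : T.domain) : H) = 0 := by
      have := norm_le_zero_iff.mp this
      exact this
    have : (z : H) = (w : H) := by
      have := sub_eq_zero.mp (by simpa using hz)
      exact this
    exact Subtype.ext this
  set M : Submodule ℂ H := LinearMap.range A with hM
  have hMclosed : IsClosed (M : Set H) := by
    apply IsSeqClosed.isClosed
    intro f w hf hfw
    choose z hz using hf
    -- the sequence z is Cauchy
    have hfc : CauchySeq f := hfw.cauchySeq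
    have hzc : CauchySeq (fun n => (z n : H)) := by
      rw [Metric.cauchySeq_iff] at hfc ⊢
      intro ε hε
      obtain ⟨N, hN⟩ := hfc (c * ε) (by positivity)
      exact ⟨N, fun m hm n hn => by
        have h1 := hN m hm n hn
        have h2 := hb' (z m - z n)
        rw [map_sub, hz m, hz n] at h2
        rw [dist_eq_norm] at h1 ⊢
        push_cast at h2
        nlinarith [norm_nonneg ((z m : H) - (z n : H))]⟩
    obtain ⟨x, hx⟩ := cauchySeq_tendsto_of_complete hzc
    have hT : Filter.Tendsto (fun n => T (z n)) Filter.atTop (nhds (w + mu • x)) := by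
      have : ∀ n, T (z n) = f n + mu • (z n : H) := by
        intro n
        rw [← hz n, hAapp]
        abel
      simp only [this]
      exact hfw.add (hx.const_smul mu)
    have hmem : (x, w + mu • x) ∈ T.graph := by
      apply hclosed.mem_of_tendsto ((hx.prodMk_nhds hT))
      filter_upwards with n
      exact T.mem_graph (z n)
    rw [LinearPMap.mem_graph_iff] at hmem
    obtain ⟨u, hu1, hu2⟩ := hmem
    refine ⟨u, ?_⟩
    rw [hAapp, hu2, hu1]
    simp
  have : CompleteSpace M := hMclosed.completeSpace_coe
  -- bounded inverse of A
  set e : T.domain ≃ₗ[ℂ] M := LinearEquiv.ofInjective A hinj with he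
  set B : M →ₗ[ℂ] H := T.domain.subtype.comp e.symm.toLinearMap with hB
  have hBA : ∀ z : T.domain, B (e z) = (z : H) := by
    intro z
    simp [hB]
  have hcoe : ∀ z : T.domain, ((e z : M) : H) = A z := fun z => rfl
  have hBbound : ∀ m : M, ‖B m‖ ≤ c⁻¹ * ‖(m : H)‖ := by
    intro m
    obtain ⟨z, hzm⟩ : ∃ z, e z = m := e.surjective m
    subst hzm
    rw [hBA, hcoe]
    calc ‖(z : H)‖ = c⁻¹ * (c * ‖(z : H)‖) := by field_simp
      _ ≤ c⁻¹ * ‖A z‖ := by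
          exact mul_le_mul_of_nonneg_left (hb' z) (by positivity)
  set Bc : M →L[ℂ] H := B.mkContinuous c⁻¹ hBbound with hBc
  set S : H →L[ℂ] H := Bc.comp (Submodule.orthogonalProjection M : H →L[ℂ] M) with hS
  have hSA : ∀ z : T.domain, S (A z) = (z : H) := by
    intro z
    have hmem : A z ∈ M := LinearMap.mem_range_self A z
    have h1 : (Submodule.orthogonalProjection M) (A z) = ⟨A z, hmem⟩ := by
      have h2 := Submodule.orthogonalProjection_mem_subspace_eq_self (K := M) ⟨A z, hmem⟩
      simpa using h2
    rw [hS]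
    simp only [ContinuousLinearMap.comp_apply, h1]
    show B ⟨A z, hmem⟩ = (z : H)
    have h3 : e z = ⟨A z, hmem⟩ := Subtype.ext (hcoe z)
    rw [← h3, hBA]
  intro y
  set x := ContinuousLinearMap.adjoint S y with hx
  have hx1 : ∀ z : T.domain, ⟪x, A z⟫ = ⟪y, (z : H)⟫ := by
    intro z
    rw [hx, ContinuousLinearMap.adjoint_inner_left, hSA]
  have hw : ∀ z : T.domain, ⟪lam0 • x + y, (z : H)⟫ = ⟪x, T z⟫ := by
    intro z
    have hTz : (T z : H) = A z + mu • (z : H) := by rw [hAapp]; abel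
    rw [hTz, inner_add_right, inner_smul_right, hx1, inner_add_left, inner_smul_left]
    rw [hmu]
    ring
  have hxd : x ∈ T.adjoint.domain :=
    LinearPMap.mem_adjoint_domain_of_exists x ⟨lam0 • x + y, hw⟩
  refine ⟨⟨x, hxd⟩, ?_⟩
  have hval : T.adjoint ⟨x, hxd⟩ = lam0 • x + y :=
    LinearPMap.adjoint_apply_eq hdense ⟨x, hxd⟩ hw
  rw [hval]
  abel


lemma mem_defect_iff (T : H →ₗ.[ℂ] H) (lam : ℂ) (x : H) :
    x ∈ defect T lam ↔ ∃ hx : x ∈ T.adjoint.domain, T.adjoint ⟨x, hx⟩ = lam • x := by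
  constructor
  · rintro ⟨u, hu, rfl⟩
    simp only [SetLike.mem_coe, LinearMap.mem_ker, LinearMap.sub_apply, LinearMap.smul_apply] at hu
    refine ⟨u.2, ?_⟩
    have h1 : T.adjoint u - lam • (u : H) = 0 := hu
    show T.adjoint ⟨(u : H), u.2⟩ = lam • (u : H)
    have h2 : (⟨(u : H), u.2⟩ : T.adjoint.domain) = u := Subtype.ext rfl
    rw [h2]
    exact sub_eq_zero.mp h1
  · rintro ⟨hx, hval⟩
    refine ⟨⟨x, hx⟩, ?_, rfl⟩
    simp only [SetLike.mem_coe, LinearMap.mem_ker, LinearMap.sub_apply, LinearMap.smul_apply]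
    show T.adjoint ⟨x, hx⟩ - lam • x = 0
    rw [hval, sub_self]



/-- Let `T̃ = T*|_{D̃}` be a closed extension of a densely defined closed symmetric operator
`T` (so `D(T) ⊆ D̃ ⊆ D(T*)`), and let `λ₀` be a point of regular type for `T`.  Then
`x ↦ T*x − λ₀x` maps `D(T̃)` bijectively onto `H` iff `D̃` and `ker(T* − λ₀)` are
transversal in `D(T*)`: `D̃ ∩ ker(T* − λ₀) = {0}` and `D̃ + ker(T* − λ₀) = D(T*)`. -/
theorem statement11 (T : H →ₗ.[ℂ] H)
    (hdense : Dense (T.domain : Set H))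
    (hclosed : IsClosed (T.graph : Set (H × H)))
    (hsymm : ∀ x y : T.domain, (inner ℂ (T x) ((y : H)) : ℂ) = inner ℂ ((x : H)) (T y))
    (Dt : Submodule ℂ H) (hDl : T.domain ≤ Dt) (hDu : Dt ≤ T.adjoint.domain)
    (hTtClosed : IsClosed ((T.adjoint.domRestrict Dt).graph : Set (H × H)))
    (lam0 : ℂ)
    (hreg : ∃ c : ℝ, 0 < c ∧ ∀ x : T.domain, c * ‖(x : H)‖ ≤ ‖T x - lam0 • (x : H)‖) :
    (∀ y : H, ∃! x : T.adjoint.domain,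
        (x : H) ∈ Dt ∧ T.adjoint x - lam0 • (x : H) = y) ↔
      (Dt ⊓ defect T lam0 = ⊥ ∧ Dt ⊔ defect T lam0 = T.adjoint.domain) := by
  constructor
  · intro h
    constructor
    · rw [eq_bot_iff]
      intro x hx
      obtain ⟨hxDt, hxdef⟩ := hx
      obtain ⟨hxd, hxval⟩ := (mem_defect_iff T lam0 x).mp hxdef
      rw [Submodule.mem_bot]
      have hx0 : (⟨x, hxd⟩ : T.adjoint.domain) = 0 := by
        refine (h 0).unique ⟨hxDt, ?_⟩ ⟨Dt.zero_mem, ?_⟩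
        · rw [hxval, sub_self]
        · simp
      have := congrArg (Subtype.val) hx0
      simpa using this
    · apply le_antisymm
      · refine sup_le hDu fun x hx => ((mem_defect_iff T lam0 x).mp hx).1
      · intro x hx
        obtain ⟨u, ⟨huDt, hueq⟩, -⟩ := h (T.adjoint ⟨x, hx⟩ - lam0 • x)
        have hdmem : x - (u : H) ∈ defect T lam0 := by
          rw [mem_defect_iff]
          have hmem : x - (u : H) ∈ T.adjoint.domain :=
            T.adjoint.domain.sub_mem hx u.2
          refine ⟨hmem, ?_⟩
          have hsub : (⟨x - (u : H), hmem⟩ : T.adjoint.domain) = ⟨x, hx⟩ - u :=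
            Subtype.ext rfl
          rw [hsub, LinearPMap.map_sub, smul_sub]
          have h6 : T.adjoint u = (T.adjoint ⟨x, hx⟩ - lam0 • x) + lam0 • (u : H) := by
            rw [← hueq]; abel
          rw [h6]; abel
        have hxsum : x = (u : H) + (x - (u : H)) := by abel
        rw [hxsum]
        exact Submodule.add_mem_sup huDt hdmem
  · rintro ⟨hinf, hsup⟩ y
    obtain ⟨x, hxeq⟩ := surj_aux T hdense hclosed hsymm lam0 hreg y
    have hxmem : (x : H) ∈ Dt ⊔ defect T lam0 := by rw [hsup]; exact x.2
    obtain ⟨u, huDt, n, hndef, hun⟩ := Submodule.mem_sup.mp hxmem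
    obtain ⟨hnd, hnval⟩ := (mem_defect_iff T lam0 n).mp hndef
    set u' : T.adjoint.domain := ⟨u, hDu huDt⟩ with hu'
    have hueq : T.adjoint u' - lam0 • u = y := by
      have hxsplit : x = u' + ⟨n, hnd⟩ := Subtype.ext (by rw [← hun]; rfl)
      rw [hxsplit, LinearPMap.map_add] at hxeq
      have hc : ((u' + ⟨n, hnd⟩ : T.adjoint.domain) : H) = u + n := rfl
      rw [hc, smul_add, hnval] at hxeq
      rw [← hxeq]
      abel
    refine ⟨u', ⟨huDt, hueq⟩, ?_⟩
    rintro x2 ⟨hx2Dt, hx2eq⟩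
    have hdmem : ((x2 : H) - u) ∈ Dt ⊓ defect T lam0 := by
      rw [Submodule.mem_inf]
      constructor
      · exact Dt.sub_mem hx2Dt huDt
      · rw [mem_defect_iff]
        have hmem : (x2 : H) - u ∈ T.adjoint.domain :=
          T.adjoint.domain.sub_mem x2.2 (hDu huDt)
        refine ⟨hmem, ?_⟩
        have hsub : (⟨(x2 : H) - u, hmem⟩ : T.adjoint.domain) = x2 - u' :=
          Subtype.ext rfl
        rw [hsub, LinearPMap.map_sub, smul_sub]
        have h6 : T.adjoint u' = y + lam0 • u := by rw [← hueq]; abel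
        have h7 : T.adjoint x2 = y + lam0 • (x2 : H) := by rw [← hx2eq]; abel
        rw [h6, h7]; abel
    rw [hinf, Submodule.mem_bot] at hdmem
    have : (x2 : H) = u := sub_eq_zero.mp hdmem
    exact Subtype.ext this


end
end

section
/- Let H be a complex Hilbert space and T a densely defined closed symmetric operator in H with adjoint T*. Let λ₀ ∈ ℝ be a point of regular type for T. Then: (a) for all x, y ∈ ker(T* − λ₀) one has ⟨T*x, y⟩ = ⟨x, T*y⟩; and (b) if y ∈ D(T*) satisfies ⟨T*x, y⟩ = ⟨x, T*y⟩ for all x ∈ ker(T* − λ₀), then y ∈ D(T) + ker(T* − λ₀), i.e. there exists y₀ ∈ D(T) with y − y₀ ∈ ker(T* − λ₀). (In other words, the image of ker(T* − λ₀) in D(T*)/D(T) is a Lagrangian subspace for the form induced by Green's formula.) -/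
noncomputable section

open Complex

variable {H : Type*} [NormedAddCommGroup H] [InnerProductSpace ℂ H] [CompleteSpace H]

-- auxiliary: closed range
lemma aux_closed_range (T : H →ₗ.[ℂ] H)
    (hclosed : IsClosed (T.graph : Set (H × H))) (lam0 : ℝ) {c : ℝ} (hc : 0 < c)
    (hb : ∀ x : T.domain, c * ‖(x : H)‖ ≤ ‖T x - (lam0 : ℂ) • (x : H)‖) :
    IsClosed ((LinearMap.range (T.toFun - (lam0 : ℂ) • T.domain.subtype) : Submodule ℂ H) : Set H) := by
  set L : T.domain →ₗ[ℂ] H := T.toFun - (lam0 : ℂ) • T.domain.subtype with hL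
  have hLapp : ∀ x : T.domain, L x = T x - (lam0 : ℂ) • (x : H) := fun x => rfl
  rw [← isSeqClosed_iff_isClosed]
  intro u b hu hub
  choose x hx using fun n => LinearMap.mem_range.mp (hu n)
  have key : ∀ m n, c * ‖(x m : H) - (x n : H)‖ ≤ ‖u m - u n‖ := by
    intro m n
    calc c * ‖(x m : H) - (x n : H)‖ = c * ‖((x m - x n : T.domain) : H)‖ := by
            rw [Submodule.coe_sub]
      _ ≤ ‖T (x m - x n) - (lam0 : ℂ) • ((x m - x n : T.domain) : H)‖ := hb _
      _ = ‖L (x m) - L (x n)‖ := by rw [← hLapp, map_sub]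
      _ = ‖u m - u n‖ := by rw [hx m, hx n]
  have hxc : CauchySeq fun n => (x n : H) := by
    rw [Metric.cauchySeq_iff]
    intro ε hε
    obtain ⟨N, hN⟩ := Metric.cauchySeq_iff.mp hub.cauchySeq (c * ε) (by positivity)
    refine ⟨N, fun m hm n hn => ?_⟩
    have h1 := key m n
    have h2 := hN m hm n hn
    rw [dist_eq_norm] at *
    nlinarith
  obtain ⟨a, ha⟩ := cauchySeq_tendsto_of_complete hxc
  have hTx : ∀ n, T (x n) = u n + (lam0 : ℂ) • (x n : H) := by
    intro n
    have := hx n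
    rw [hLapp] at this
    rw [← this]; abel
  have hT : Filter.Tendsto (fun n => T (x n)) Filter.atTop (nhds (b + (lam0 : ℂ) • a)) := by
    simp only [hTx]
    exact hub.add (ha.const_smul _)
  have hmem : (a, b + (lam0 : ℂ) • a) ∈ T.graph := by
    refine hclosed.mem_of_tendsto (ha.prodMk_nhds hT) ?_
    exact Filter.Eventually.of_forall fun n => T.mem_graph (x n)
  obtain ⟨y, hy1, hy2⟩ := T.mem_graph_iff.mp hmem
  refine LinearMap.mem_range.mpr ⟨y, ?_⟩
  rw [hLapp, hy1, hy2]
  simp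

/-- Let `T` be a densely defined closed symmetric operator and `λ₀ ∈ ℝ` a point of regular
type for `T`.  Then (a) `⟨T*x, y⟩ = ⟨x, T*y⟩` for all `x, y ∈ ker(T* − λ₀)`, and (b) any
`y ∈ D(T*)` with `⟨T*x, y⟩ = ⟨x, T*y⟩` for all `x ∈ ker(T* − λ₀)` belongs to
`D(T) + ker(T* − λ₀)`.  (The image of `ker(T* − λ₀)` in `D(T*)/D(T)` is Lagrangian.) -/
theorem statement12 (T : H →ₗ.[ℂ] H)
    (hdense : Dense (T.domain : Set H))
    (hclosed : IsClosed (T.graph : Set (H × H)))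
    (hsymm : ∀ x y : T.domain, (inner ℂ (T x) ((y : H)) : ℂ) = inner ℂ ((x : H)) (T y))
    (lam0 : ℝ)
    (hreg : ∃ c : ℝ, 0 < c ∧ ∀ x : T.domain,
      c * ‖(x : H)‖ ≤ ‖T x - (lam0 : ℂ) • (x : H)‖) :
    (∀ x y : T.adjoint.domain,
      T.adjoint x = (lam0 : ℂ) • (x : H) → T.adjoint y = (lam0 : ℂ) • (y : H) →
      (inner ℂ (T.adjoint x) ((y : H)) : ℂ) = inner ℂ ((x : H)) (T.adjoint y)) ∧
    (∀ y : T.adjoint.domain,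
      (∀ x : T.adjoint.domain, T.adjoint x = (lam0 : ℂ) • (x : H) →
        (inner ℂ (T.adjoint x) ((y : H)) : ℂ) = inner ℂ ((x : H)) (T.adjoint y)) →
      ∃ y₀ ∈ T.domain, ∃ h : ((y : H) - y₀) ∈ T.adjoint.domain,
        T.adjoint ⟨(y : H) - y₀, h⟩ = (lam0 : ℂ) • ((y : H) - y₀)) := by
  obtain ⟨c, hc, hb⟩ := hreg
  constructor
  · intro x y hx hy
    rw [hx, hy, inner_smul_left, inner_smul_right, Complex.conj_ofReal]
  intro y hy
  set L : T.domain →ₗ[ℂ] H := T.toFun - (lam0 : ℂ) • T.domain.subtype with hLdef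
  have hLapp : ∀ x : T.domain, L x = T x - (lam0 : ℂ) • (x : H) := fun x => rfl
  set R : Submodule ℂ H := LinearMap.range L with hRdef
  have hRclosed : IsClosed (R : Set H) := aux_closed_range T hclosed lam0 hc hb
  haveI : CompleteSpace R := hRclosed.completeSpace_coe
  have hle : T ≤ T.adjoint := LinearPMap.IsFormalAdjoint.le_adjoint hdense hsymm
  set u : H := T.adjoint y - (lam0 : ℂ) • (y : H) with hu
  have huo : ∀ v ∈ Rᗮ, (inner ℂ v u : ℂ) = 0 := by
    intro v hv
    have hv' : ∀ x : T.domain, (inner ℂ ((lam0 : ℂ) • v) ((x : H)) : ℂ) = inner ℂ v (T x) := by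
      intro x
      have h0 : (inner ℂ (T x - (lam0 : ℂ) • (x : H)) v : ℂ) = 0 := by
        have := (Submodule.mem_orthogonal R v).mp hv (L x) (LinearMap.mem_range.mpr ⟨x, rfl⟩)
        rwa [hLapp] at this
      rw [inner_sub_left] at h0
      have h1 : (inner ℂ (T x) v : ℂ) = inner ℂ ((lam0 : ℂ) • (x : H)) v := by
        linear_combination h0
      rw [inner_smul_left, ← inner_conj_symm v (T x), h1, inner_smul_left]
      simp [map_mul, Complex.conj_conj, Complex.conj_ofReal, inner_conj_symm]
    have hvdom : v ∈ T.adjoint.domain :=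
      LinearPMap.mem_adjoint_domain_of_exists _ ⟨(lam0 : ℂ) • v, hv'⟩
    have hvapp : T.adjoint ⟨v, hvdom⟩ = (lam0 : ℂ) • v :=
      LinearPMap.adjoint_apply_eq hdense _ hv'
    have hgreen := hy ⟨v, hvdom⟩ hvapp
    rw [hvapp, inner_smul_left, Complex.conj_ofReal] at hgreen
    rw [hu, inner_sub_right, inner_smul_right, ← hgreen]
    ring
  have humem : u ∈ R := by
    have : u ∈ Rᗮᗮ := (Submodule.mem_orthogonal Rᗮ u).mpr huo
    rwa [Submodule.orthogonal_orthogonal] at this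
  obtain ⟨y₀, hy₀⟩ := LinearMap.mem_range.mp humem
  rw [hLapp] at hy₀
  have hy₀dom : ((y₀ : H)) ∈ T.adjoint.domain := hle.1 y₀.2
  have hsub : ((y : H) - (y₀ : H)) ∈ T.adjoint.domain := sub_mem y.2 hy₀dom
  refine ⟨(y₀ : H), y₀.2, hsub, ?_⟩
  have heq : (⟨(y : H) - (y₀ : H), hsub⟩ : T.adjoint.domain)
      = y - ⟨(y₀ : H), hy₀dom⟩ := by
    apply Subtype.ext; simp
  rw [heq, LinearPMap.map_sub]
  have hTy₀ : T.adjoint ⟨(y₀ : H), hy₀dom⟩ = T y₀ := (hle.2 rfl).symm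
  rw [hTy₀]
  have : T y₀ = u + (lam0 : ℂ) • (y₀ : H) := by rw [← hy₀]; abel
  rw [this, hu, smul_sub]
  abel

end
end
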